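/- arXiv:1604.06753 — 6 statements merged into one kernel-verified Lean document; each statement's English description precedes it below -/
import Mathlib

section
/- Let f be a polynomial of degree mn over F_q with n-Horner form components f_0,...,f_{m-1}, f_m, and let H_m(n,f) be the m×m matrix over F_q[X] with diagonal entries X^n (except the (m,m)-entry), entries −1 on the subdiagonal, last column (f_0, f_1, ..., f_{m-2}, f_{m-1} + f_m X^n)^T, and zeros elsewhere. Then det(H_m(n,f)) = f(X). -/
open Polynomial Matrix

lemma det_companion_like {R : Type*} [CommRing R] (t : R) :
    ∀ (m : ℕ) (v : Fin (m+1) → R),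
    (Matrix.of fun i j : Fin (m+1) => if (j:ℕ) = m then v i else if i = j then t
      else if (i:ℕ) = (j:ℕ)+1 then -1 else 0).det = ∑ i, v i * t ^ (i:ℕ) := by
  intro m
  induction m with
  | zero =>
    intro v
    simp [Matrix.det_fin_one]
  | succ m ih =>
    intro v
    rw [Matrix.det_succ_row_zero, Fin.sum_univ_succ]
    have hminor0 : ((Matrix.of fun i j : Fin (m+2) => if (j:ℕ) = m+1 then v i else if i = j then t
        else if (i:ℕ) = (j:ℕ)+1 then -1 else 0).submatrix Fin.succ
        (Fin.succAbove 0)).det = ∑ i : Fin (m+1), v i.succ * t ^ (i:ℕ) := by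
      have : ((Matrix.of fun i j : Fin (m+2) => if (j:ℕ) = m+1 then v i else if i = j then t
        else if (i:ℕ) = (j:ℕ)+1 then -1 else 0).submatrix Fin.succ (Fin.succAbove 0))
        = (Matrix.of fun i j : Fin (m+1) => if (j:ℕ) = m then v i.succ else if i = j then t
          else if (i:ℕ) = (j:ℕ)+1 then -1 else 0) := by
        ext i j
        simp only [Matrix.submatrix_apply, Matrix.of_apply, Fin.succAbove_zero, Fin.val_succ,
          Fin.succ_inj]
        congr 1
        · simp [Nat.add_right_cancel_iff]
        · congr 1
          simp [Nat.add_right_cancel_iff]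
      rw [this, ih]
    rw [hminor0]
    have hrest : ∑ j : Fin (m+1),
        (-1 : R) ^ ((j.succ : Fin (m+2)) : ℕ) *
          (Matrix.of fun i j : Fin (m+2) => if (j:ℕ) = m+1 then v i else if i = j then t
            else if (i:ℕ) = (j:ℕ)+1 then -1 else 0) 0 j.succ *
          ((Matrix.of fun i j : Fin (m+2) => if (j:ℕ) = m+1 then v i else if i = j then t
            else if (i:ℕ) = (j:ℕ)+1 then -1 else 0).submatrix Fin.succ j.succ.succAbove).det
        = v 0 := by
      rw [Finset.sum_eq_single (Fin.last m)]
      · -- the last-column term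
        have hentry : (Matrix.of fun i j : Fin (m+2) => if (j:ℕ) = m+1 then v i else if i = j then t
            else if (i:ℕ) = (j:ℕ)+1 then -1 else 0) 0 (Fin.last m).succ = v 0 := by
          simp [Fin.val_succ, Fin.val_last]
        rw [hentry]
        have hmat : ((Matrix.of fun i j : Fin (m+2) => if (j:ℕ) = m+1 then v i else if i = j then t
            else if (i:ℕ) = (j:ℕ)+1 then -1 else 0).submatrix Fin.succ
            (Fin.last m).succ.succAbove)
            = (Matrix.of fun i j : Fin (m+1) => if (i:ℕ)+1 = (j:ℕ) then t
                else if i = j then -1 else 0) := by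
          ext i j
          have hsA : (Fin.last m).succ.succAbove j = j.castSucc := by
            rw [Fin.succ_last, Fin.succAbove_last]
          simp only [Matrix.submatrix_apply, hsA, Matrix.of_apply, Fin.val_succ,
            Fin.coe_castSucc]
          have hj : (j : ℕ) ≠ m + 1 := by omega
          rw [if_neg hj]
          have h2 : (Fin.succ i = Fin.castSucc j) ↔ ((i:ℕ)+1 = (j:ℕ)) := by
            rw [Fin.ext_iff]; simp
          simp only [h2]
          congr 1
          simp [Nat.add_right_cancel_iff, eq_comm, Fin.ext_iff]
        rw [hmat]
        have hdet : (Matrix.of fun i j : Fin (m+1) => if (i:ℕ)+1 = (j:ℕ) then t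
            else if i = j then -1 else 0).det = (-1 : R) ^ (m+1) := by
          rw [Matrix.det_of_upperTriangular]
          · simp [Matrix.diag]
          · intro i j hij
            simp only [Matrix.of_apply]
            rw [if_neg (by simp at hij ⊢; omega),
              if_neg (by rintro rfl; exact absurd hij (lt_irrefl _))]
        rw [hdet]
        have hv : ((Fin.last m).succ : ℕ) = m + 1 := by simp
        rw [hv, mul_comm, ← mul_assoc, ← pow_add]
        rw [Even.neg_one_pow ⟨m+1, rfl⟩, one_mul]
      · intro j _ hjne
        have hentry : (Matrix.of fun i j : Fin (m+2) => if (j:ℕ) = m+1 then v i else if i = j then t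
            else if (i:ℕ) = (j:ℕ)+1 then -1 else 0) 0 j.succ = 0 := by
          have h1 : ((j.succ : Fin (m+2)) : ℕ) ≠ m + 1 := by
            simp only [Fin.val_succ]
            intro h
            apply hjne
            ext; simp [Fin.val_last]; omega
          have h2 : (0 : Fin (m+2)) ≠ j.succ := (Fin.succ_ne_zero j).symm
          have h3 : ((0 : Fin (m+2)) : ℕ) ≠ ((j.succ : Fin (m+2)) : ℕ) + 1 := by simp
          simp only [Matrix.of_apply, if_neg h1, if_neg h2, if_neg h3]
        rw [hentry]; ring
      · simp
    rw [hrest]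
    have hA00 : (Matrix.of fun i j : Fin (m+2) => if (j:ℕ) = m+1 then v i else if i = j then t
            else if (i:ℕ) = (j:ℕ)+1 then -1 else 0) 0 0 = t := by
      simp
    rw [hA00]
    rw [Fin.sum_univ_succ (f := fun i : Fin (m+2) => v i * t ^ (i:ℕ))]
    simp only [Fin.val_zero, pow_zero, mul_one, Fin.val_succ]
    rw [add_comm, Finset.mul_sum]
    refine congrArg (v 0 + ·) (Finset.sum_congr rfl fun i _ => ?_)
    rw [pow_succ]; ring


lemma horner_sum_eq {K : Type*} [Field K] (m n : ℕ) (hn : 0 < n) (f : Polynomial K)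
    (hdeg : f.natDegree = m * n) :
    ∑ i ∈ Finset.range m,
      (∑ k ∈ Finset.range n, Polynomial.C (f.coeff (i * n + k)) * X ^ k) * (X ^ n) ^ i
      + Polynomial.C (f.coeff (m * n)) * X ^ (m * n) = f := by
  conv_rhs => rw [f.as_sum_range' (m * n + 1) (by omega)]
  rw [Finset.sum_range_succ, ← C_mul_X_pow_eq_monomial]
  congr 1
  have hsplit : ∑ j ∈ Finset.range (m * n), (monomial j (f.coeff j))
      = ∑ i ∈ Finset.range m, ∑ k ∈ Finset.range n,
          Polynomial.C (f.coeff (i * n + k)) * X ^ (i * n + k) := by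
    rw [← Finset.sum_product']
    refine Finset.sum_nbij' (fun j => (j / n, j % n)) (fun p => p.1 * n + p.2) ?_ ?_ ?_ ?_ ?_
    · intro j hj
      simp only [Finset.mem_range] at hj
      simp only [Finset.mem_product, Finset.mem_range]
      constructor
      · exact Nat.div_lt_of_lt_mul (by rwa [Nat.mul_comm] at hj)
      · exact Nat.mod_lt _ hn
    · rintro ⟨i, k⟩ hp
      simp only [Finset.mem_product, Finset.mem_range] at hp
      simp only [Finset.mem_range]
      calc i * n + k < i * n + n := by omega
        _ = (i + 1) * n := by ring
        _ ≤ m * n := Nat.mul_le_mul_right n (by omega)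
    · intro j _; exact Nat.div_add_mod' j n
    · rintro ⟨i, k⟩ hp
      simp only [Finset.mem_product, Finset.mem_range] at hp
      have h1 : (i * n + k) / n = i := by
        rw [add_comm, Nat.add_mul_div_right _ _ hn, Nat.div_eq_of_lt hp.2, zero_add]
      have h2 : (i * n + k) % n = k := by
        rw [add_comm, Nat.add_mul_mod_self_right, Nat.mod_eq_of_lt hp.2]
      simp [h1, h2]
    · intro j _
      dsimp only
      rw [Nat.div_add_mod', C_mul_X_pow_eq_monomial]
  rw [hsplit]
  apply Finset.sum_congr rfl
  intro i _
  rw [Finset.sum_mul]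
  apply Finset.sum_congr rfl
  intro k _
  rw [← pow_mul, mul_assoc, ← pow_add]
  congr 2
  ring

/-- The n-Horner matrix `H_m(n,f)` of a polynomial `f` of degree `m*n`:
diagonal entries `X^n` (except the bottom-right one), `-1` on the subdiagonal,
last column the n-Horner components `(f_0, ..., f_{m-2}, f_{m-1} + f_m X^n)ᵀ`
where `f_i = ∑_{k<n} a_{i n + k} X^k` and `f_m = a_{mn}`. -/
noncomputable def hornerMatrix (K : Type*) [Field K] (m n : ℕ) (f : Polynomial K) :
    Matrix (Fin m) (Fin m) (Polynomial K) :=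
  Matrix.of fun i j =>
    if (j : ℕ) = m - 1 then
      (if (i : ℕ) = m - 1 then
        (∑ k ∈ Finset.range n, Polynomial.C (f.coeff ((m - 1) * n + k)) * X ^ k)
          + Polynomial.C (f.coeff (m * n)) * X ^ n
       else ∑ k ∈ Finset.range n, Polynomial.C (f.coeff ((i : ℕ) * n + k)) * X ^ k)
    else if i = j then X ^ n
    else if (i : ℕ) = (j : ℕ) + 1 then -1 else 0

theorem det_hornerMatrix {K : Type*} [Field K] (m n : ℕ) (hm : 0 < m) (hn : 0 < n)
    (f : Polynomial K) (hdeg : f.natDegree = m * n) :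
    (hornerMatrix K m n f).det = f := by
  obtain ⟨m', rfl⟩ : ∃ m', m = m' + 1 := ⟨m - 1, by omega⟩
  set v : Fin (m' + 1) → Polynomial K := fun i =>
    if (i : ℕ) = m' then
      (∑ k ∈ Finset.range n, Polynomial.C (f.coeff (m' * n + k)) * X ^ k)
        + Polynomial.C (f.coeff ((m' + 1) * n)) * X ^ n
    else ∑ k ∈ Finset.range n, Polynomial.C (f.coeff ((i : ℕ) * n + k)) * X ^ k with hv
  have hM : hornerMatrix K (m' + 1) n f = Matrix.of fun i j : Fin (m' + 1) =>
      if (j : ℕ) = m' then v i else if i = j then X ^ n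
      else if (i : ℕ) = (j : ℕ) + 1 then -1 else 0 := by
    ext i j
    simp only [hornerMatrix, Matrix.of_apply, Nat.add_sub_cancel, hv]
  rw [hM, det_companion_like]
  rw [Fin.sum_univ_castSucc]
  have hvlast : v (Fin.last m') = (∑ k ∈ Finset.range n,
      Polynomial.C (f.coeff (m' * n + k)) * X ^ k)
        + Polynomial.C (f.coeff ((m' + 1) * n)) * X ^ n := by
    simp [hv]
  have hvcast : ∀ i : Fin m', v i.castSucc
      = ∑ k ∈ Finset.range n, Polynomial.C (f.coeff ((i : ℕ) * n + k)) * X ^ k := by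
    intro i
    have h' : (i : ℕ) ≠ m' := by have := i.isLt; omega
    simp only [hv, Fin.coe_castSucc, if_neg h']
  have key := horner_sum_eq (m' + 1) n hn f hdeg
  rw [Finset.sum_range_succ] at key
  simp only [hvlast, Fin.val_last, hvcast, Fin.coe_castSucc]
  rw [Fin.sum_univ_eq_sum_range
    (fun i => (∑ k ∈ Finset.range n, Polynomial.C (f.coeff (i * n + k)) * X ^ k) * (X ^ n) ^ i) m']
  refine Eq.trans ?_ key
  rw [add_mul, ← add_assoc]
  congr 1
  rw [mul_assoc, ← pow_mul, ← pow_add]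
  congr 2
  ring
end

section
/- For a monic polynomial f of degree mn over F_q, let C_0,...,C_{n-1} be the coefficient matrices of the n-Horner matrix, i.e., H_m(n,f) = I_m X^n + C_{n-1}X^{n-1} + ⋯ + C_0, and let T̃ be the corresponding (m,n)-block companion matrix. Then the characteristic polynomial of T̃ equals f(X). -/
open Polynomial Matrix

/-- The (m,n)-block companion matrix with identity blocks on the block subdiagonal
and last block column `(C 0, ..., C (n-1))ᵀ`. -/
def blockCompanion {K : Type*} [Field K] (m n : ℕ)
    (C : Fin n → Matrix (Fin m) (Fin m) K) :
    Matrix (Fin n × Fin m) (Fin n × Fin m) K :=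
  Matrix.of fun p q =>
    if (q.1 : ℕ) = n - 1 then C p.1 p.2 q.2
    else if (p.1 : ℕ) = (q.1 : ℕ) + 1 ∧ p.2 = q.2 then (1 : K) else 0


lemma leftMulMatrix_reindex_aux {R S ι ι' : Type*} [CommRing R] [Ring S] [Algebra R S]
    [Fintype ι] [Fintype ι'] [DecidableEq ι] [DecidableEq ι']
    (b : Module.Basis ι R S) (e : ι ≃ ι') (x : S) :
    Algebra.leftMulMatrix (b.reindex e) x =
      Matrix.reindex e e (Algebra.leftMulMatrix b x) := by
  ext i j
  rw [Algebra.leftMulMatrix_eq_repr_mul, Matrix.reindex_apply, Matrix.submatrix_apply,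
    Algebra.leftMulMatrix_eq_repr_mul, Module.Basis.reindex_apply, Module.Basis.repr_reindex]
  simp [Finsupp.mapDomain_equiv_apply]

lemma sum_range_coeff_aux {K : Type*} [Field K] (n : ℕ) (c : ℕ → K) (p : ℕ) (hp : p < n) :
    (∑ k ∈ Finset.range n, Polynomial.C (c k) * X ^ k).coeff p = c p := by
  rw [Polynomial.finset_sum_coeff]
  rw [Finset.sum_eq_single p]
  · simp
  · intro k _ hk
    simp [Polynomial.coeff_C_mul, Polynomial.coeff_X_pow, Ne.symm hk]
  · intro h
    exact absurd (Finset.mem_range.2 hp) h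

theorem charpoly_hornerBlockCompanion {K : Type*} [Field K] [Fintype K]
    (m n : ℕ) (hm : 0 < m) (hn : 0 < n)
    (f : Polynomial K) (hmon : f.Monic) (hdeg : f.natDegree = m * n) :
    (blockCompanion m n (fun j : Fin n =>
        Matrix.of fun a b : Fin m => -(((hornerMatrix K m n f) a b).coeff (j : ℕ)))).charpoly
      = f := by
  classical
  have hf0 : f ≠ 0 := hmon.ne_zero
  set T := (blockCompanion m n (fun j : Fin n =>
      Matrix.of fun a b : Fin m => -(((hornerMatrix K m n f) a b).coeff (j : ℕ)))) with hTdef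
  set pb := AdjoinRoot.powerBasis hf0 with hpbdef
  set r := AdjoinRoot.root f with hrdef
  have hdim : m * n = pb.dim := by rw [AdjoinRoot.powerBasis_dim, hdeg]
  set E : (Fin n × Fin m) ≃ Fin pb.dim :=
    (Equiv.prodComm _ _).trans (finProdFinEquiv.trans (finCongr hdim)) with hEdef
  set b := pb.basis.reindex E.symm with hbdef
  have hEval : ∀ q : Fin n × Fin m, ((E q : ℕ)) = (q.1 : ℕ) + n * (q.2 : ℕ) := by
    intro q; simp [hEdef]
  have hb : ∀ q : Fin n × Fin m, b q = r ^ ((q.1 : ℕ) + n * (q.2 : ℕ)) := by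
    intro q
    rw [hbdef, Module.Basis.reindex_apply, Equiv.symm_symm, pb.basis_eq_pow, hEval]
    rw [hpbdef, AdjoinRoot.powerBasis_gen]
  -- the key relation f(r) = 0 in expanded form
  have hroot : r ^ (m * n) = -∑ i ∈ Finset.range (m * n), f.coeff i • r ^ i := by
    have h1 : (aeval r) (X ^ (m * n) + ∑ i ∈ Finset.range (m * n), C (f.coeff i) * X ^ i)
        = 0 := by
      rw [← hdeg, ← hmon.as_sum, hrdef, AdjoinRoot.aeval_eq, AdjoinRoot.mk_self]
    have h2 : r ^ (m * n) + ∑ i ∈ Finset.range (m * n), f.coeff i • r ^ i = 0 := by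
      simpa [Algebra.smul_def] using h1
    exact eq_neg_of_add_eq_zero_left h2
  -- the key column computation
  have key : ∀ q : Fin n × Fin m, (Matrix.toLin b b) T (b q) = pb.gen * b q := by
    rintro ⟨q1, q2⟩
    rw [Matrix.toLin_self]
    have hgen : pb.gen = r := by rw [hpbdef, AdjoinRoot.powerBasis_gen, hrdef]
    rw [hgen, hb]
    have hRHS : r * r ^ ((q1 : ℕ) + n * (q2 : ℕ))
        = r ^ ((q1 : ℕ) + n * (q2 : ℕ) + 1) := by
      rw [pow_succ, mul_comm]
    rw [hRHS]
    by_cases hq1 : (q1 : ℕ) = n - 1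
    · by_cases hq2 : (q2 : ℕ) = m - 1
      · -- bottom-right column: use f(r) = 0
        have hent : ∀ p : Fin n × Fin m,
            T p (q1, q2) • b p = -(f.coeff ((p.1 : ℕ) + n * (p.2 : ℕ))) •
              r ^ ((p.1 : ℕ) + n * (p.2 : ℕ)) := by
          rintro ⟨p1, p2⟩
          rw [hb]
          congr 1
          rw [hTdef]
          simp only [blockCompanion, hornerMatrix, Matrix.of_apply, if_pos hq1, if_pos hq2]
          by_cases hp2 : (p2 : ℕ) = m - 1
          · rw [if_pos hp2]
            rw [Polynomial.coeff_add, sum_range_coeff_aux n _ _ p1.isLt]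
            rw [Polynomial.coeff_C_mul, Polynomial.coeff_X_pow,
              if_neg (by exact Nat.ne_of_lt p1.isLt)]
            rw [mul_zero, add_zero]
            congr 2
            rw [hp2]
            ring
          · rw [if_neg hp2, sum_range_coeff_aux n _ _ p1.isLt]
            congr 2
            ring
        rw [Finset.sum_congr rfl fun p _ => hent p]
        have hEq : ∀ p : Fin n × Fin m,
            -(f.coeff ((p.1 : ℕ) + n * (p.2 : ℕ))) • r ^ ((p.1 : ℕ) + n * (p.2 : ℕ))
              = (fun k : Fin (m * n) => -(f.coeff (k : ℕ)) • r ^ (k : ℕ))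
                  (((Equiv.prodComm (Fin n) (Fin m)).trans finProdFinEquiv) p) := by
          rintro ⟨p1, p2⟩
          simp
        rw [Finset.sum_congr rfl fun p _ => hEq p]
        rw [Equiv.sum_comp (((Equiv.prodComm (Fin n) (Fin m)).trans finProdFinEquiv))
          (fun k : Fin (m * n) => -(f.coeff (k : ℕ)) • r ^ (k : ℕ))]
        rw [Fin.sum_univ_eq_sum_range (fun k => -(f.coeff k) • r ^ k) (m * n)]
        have hexp : (q1 : ℕ) + n * (q2 : ℕ) + 1 = m * n := by
          obtain ⟨n', rfl⟩ : ∃ n', n = n' + 1 := ⟨n - 1, by omega⟩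
          obtain ⟨m', rfl⟩ : ∃ m', m = m' + 1 := ⟨m - 1, by omega⟩
          simp only [Nat.add_sub_cancel] at hq1 hq2
          rw [hq1, hq2]
          ring
        rw [hexp, hroot]
        simp [neg_smul, Finset.sum_neg_distrib]
      · -- column q2 < m - 1, bottom row block: shift e_{q2} -> e_{q2+1}
        have hq2' : (q2 : ℕ) + 1 < m := by omega
        rw [Finset.sum_eq_single ((⟨0, hn⟩ : Fin n), (⟨(q2 : ℕ) + 1, hq2'⟩ : Fin m))]
        · rw [hb, hTdef]
          simp only [blockCompanion, hornerMatrix, Matrix.of_apply, if_pos hq1, if_neg hq2]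
          rw [if_neg (by simp [Fin.ext_iff]), if_pos (by simp)]
          simp only [Polynomial.coeff_neg, Polynomial.coeff_one]
          norm_num
          have hee : (q1 : ℕ) + n * (q2 : ℕ) + 1 = 0 + n * ((q2 : ℕ) + 1) := by
            obtain ⟨n', rfl⟩ : ∃ n', n = n' + 1 := ⟨n - 1, by omega⟩
            simp only [Nat.add_sub_cancel] at hq1
            rw [hq1]
            ring
          rw [hee]
          congr 1
          omega
        · rintro ⟨p1, p2⟩ - hne
          rw [hTdef]
          simp only [blockCompanion, hornerMatrix, Matrix.of_apply, if_pos hq1, if_neg hq2]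
          by_cases hp2 : p2 = q2
          · rw [if_pos hp2]
            rw [Polynomial.coeff_X_pow, if_neg (Nat.ne_of_lt p1.isLt)]
            simp
          · rw [if_neg hp2]
            by_cases hp2' : (p2 : ℕ) = (q2 : ℕ) + 1
            · rw [if_pos hp2']
              have hp1 : (p1 : ℕ) ≠ 0 := by
                intro h
                apply hne
                ext <;> simp [h, hp2']
              simp [Polynomial.coeff_one, hp1]
            · rw [if_neg hp2']
              simp
        · intro h; exact absurd (Finset.mem_univ _) h
    · -- generic column: shift within a block
      have hq1' : (q1 : ℕ) + 1 < n := by omega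
      rw [Finset.sum_eq_single ((⟨(q1 : ℕ) + 1, hq1'⟩ : Fin n), q2)]
      · rw [hb, hTdef]
        simp only [blockCompanion, Matrix.of_apply, if_neg hq1]
        rw [if_pos (by simp)]
        rw [one_smul]
        congr 1
        omega
      · rintro ⟨p1, p2⟩ - hne
        rw [hTdef]
        simp only [blockCompanion, Matrix.of_apply, if_neg hq1]
        rw [if_neg]
        · simp
        · rintro ⟨h1, h2⟩
          apply hne
          ext <;> simp [h1, h2]
      · intro h; exact absurd (Finset.mem_univ _) h
  -- conclude
  have hTmap : Matrix.toLin b b T = Algebra.lmul K (AdjoinRoot f) pb.gen :=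
    b.ext fun q => by rw [key q]; simp [Algebra.coe_lmul_eq_mul]
  have hT : T = Algebra.leftMulMatrix b pb.gen := by
    rw [Algebra.leftMulMatrix_apply, ← hTmap, LinearMap.toMatrix_toLin]
  rw [hT, hbdef, leftMulMatrix_reindex_aux, Matrix.charpoly_reindex,
    charpoly_leftMulMatrix]
  rw [hpbdef, AdjoinRoot.minpoly_powerBasis_gen_of_monic hmon]
end

section
/- The characteristic map Ψ_P from the set of (m,n)-block companion matrices over F_q whose characteristic polynomial is primitive, to the set of primitive polynomials of degree mn over F_q, given by T ↦ det(XI_{mn} − T), is surjective. -/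
open Polynomial Matrix

/-- A polynomial over a finite field is primitive if it is monic, irreducible, and the
image of `X` in the quotient ring `K[X]/(f)` has multiplicative order `q^(deg f) - 1`,
i.e. its roots generate the multiplicative group of `F_{q^(deg f)}`. -/
def IsPrimitivePoly (K : Type*) [Field K] [Fintype K] (f : Polynomial K) : Prop :=
  f.Monic ∧ Irreducible f ∧
    orderOf (Ideal.Quotient.mk (Ideal.span {f}) (Polynomial.X : Polynomial K)) =
      Fintype.card K ^ f.natDegree - 1

private lemma euclid_aux {n x y a b : ℕ} (hx : x < n) (hy : y < n)
    (h : x + n * a = y + n * b) : x = y ∧ a = b := by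
  have h1 : x = y := by
    have h2 := congrArg (· % n) h
    simpa [Nat.add_mul_mod_self_left, Nat.mod_eq_of_lt hx, Nat.mod_eq_of_lt hy] using h2
  subst h1
  have hn : 0 < n := lt_of_le_of_lt (Nat.zero_le _) hx
  exact ⟨rfl, Nat.eq_of_mul_eq_mul_left hn (by omega)⟩

theorem charpoly_map_surjective_on_primitive {K : Type*} [Field K] [Fintype K]
    (m n : ℕ) (hm : 0 < m) (hn : 0 < n)
    (f : Polynomial K) (hf : IsPrimitivePoly K f) (hdeg : f.natDegree = m * n) :
    ∃ C : Fin n → Matrix (Fin m) (Fin m) K,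
      (blockCompanion m n C).charpoly = f := by
  obtain ⟨hmonic, hirr, -⟩ := hf
  have hf0 : f ≠ 0 := hmonic.ne_zero
  set pb := AdjoinRoot.powerBasis hf0 with hpb
  have hmg : pb.minpolyGen = f := by
    rw [PowerBasis.minpolyGen_eq, AdjoinRoot.minpoly_powerBasis_gen_of_monic hmonic]
  have hM : Algebra.leftMulMatrix pb.basis pb.gen =
      Matrix.of (fun i j : Fin f.natDegree =>
        if (j : ℕ) + 1 = f.natDegree then -f.coeff i else if (i : ℕ) = (j : ℕ) + 1 then 1 else 0) := by
    rw [pb.leftMulMatrix, hmg]; rfl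
  let E : Fin n × Fin m ≃ Fin (f.natDegree) :=
    (Equiv.prodComm (Fin n) (Fin m)).trans (finProdFinEquiv.trans (finCongr hdeg.symm))
  have hE : ∀ p : Fin n × Fin m, (E p : ℕ) = (p.1 : ℕ) + n * (p.2 : ℕ) := fun p => rfl
  have hdim : pb.dim = f.natDegree := rfl
  refine ⟨fun i => Matrix.of fun a b =>
      if (b : ℕ) = m - 1 then -f.coeff ((i : ℕ) + n * (a : ℕ))
      else if (i : ℕ) = 0 ∧ (a : ℕ) = (b : ℕ) + 1 then 1 else 0, ?_⟩
  have key : blockCompanion m n (fun i => Matrix.of fun a b =>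
      if (b : ℕ) = m - 1 then -f.coeff ((i : ℕ) + n * (a : ℕ))
      else if (i : ℕ) = 0 ∧ (a : ℕ) = (b : ℕ) + 1 then 1 else 0) =
      Matrix.reindex E.symm E.symm (Algebra.leftMulMatrix pb.basis pb.gen) := by
    rw [hM]
    ext p q
    simp only [blockCompanion, Matrix.reindex_apply, Matrix.submatrix_apply, Equiv.symm_symm,
      Matrix.of_apply]
    have h4 : n * (m - 1) + n = n * m := by
      have h5 : m - 1 + 1 = m := Nat.succ_pred_eq_of_pos hm
      calc n * (m - 1) + n = n * ((m - 1) + 1) := by ring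
        _ = n * m := by rw [h5]
    have h6 : m * n = n * m := Nat.mul_comm m n
    by_cases hq1 : (q.1 : ℕ) = n - 1
    · by_cases hq2 : (q.2 : ℕ) = m - 1
      · have hcond : (E q : ℕ) + 1 = f.natDegree := by
          rw [hE, hq1, hq2, hdeg]
          have h1 : (1:ℕ) ≤ n := hn
          omega
        rw [if_pos hq1, if_pos hq2, if_pos hcond, hE]
      · have hq2' : (q.2 : ℕ) < m - 1 := lt_of_le_of_ne (by have := q.2.2; omega) hq2
        have h7 : n * ((q.2 : ℕ) + 1) ≤ n * (m - 1) := Nat.mul_le_mul_left n (by omega)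
        have h8 : n * ((q.2 : ℕ) + 1) = n * (q.2 : ℕ) + n := by ring
        have hne : (E q : ℕ) + 1 ≠ f.natDegree := by
          rw [hE, hq1, hdeg]
          have h1 : (1:ℕ) ≤ n := hn
          omega
        have heq : (E q : ℕ) + 1 = 0 + n * ((q.2 : ℕ) + 1) := by
          rw [hE, hq1]
          have h1 : (1:ℕ) ≤ n := hn
          omega
        rw [if_pos hq1, if_neg hne, if_neg hq2]
        by_cases hp : (p.1 : ℕ) = 0 ∧ (p.2 : ℕ) = (q.2 : ℕ) + 1
        · rw [if_pos hp, if_pos (show (E p : ℕ) = (E q : ℕ) + 1 by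
            rw [hE, hp.1, hp.2]; exact heq.symm)]
        · rw [if_neg hp, if_neg (fun hcon => by
            rw [hE, heq] at hcon
            exact hp (euclid_aux p.1.2 hn hcon))]
    · have hq1' : (q.1 : ℕ) + 1 < n := by have := q.1.2; omega
      have h7 : n * ((q.2 : ℕ) + 1) ≤ n * m := Nat.mul_le_mul_left n q.2.2
      have h8 : n * ((q.2 : ℕ) + 1) = n * (q.2 : ℕ) + n := by ring
      have hne : (E q : ℕ) + 1 ≠ f.natDegree := by
        rw [hE, hdeg]
        omega
      rw [if_neg hq1, if_neg hne]
      by_cases hp : (p.1 : ℕ) = (q.1 : ℕ) + 1 ∧ p.2 = q.2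
      · rw [if_pos hp, if_pos (show (E p : ℕ) = (E q : ℕ) + 1 by
          rw [hE, hE, hp.1, hp.2]; ring)]
      · rw [if_neg hp, if_neg (fun hcon => by
          rw [hE, hE] at hcon
          have hcon' : (p.1 : ℕ) + n * (p.2 : ℕ) = ((q.1 : ℕ) + 1) + n * (q.2 : ℕ) := by omega
          obtain ⟨h1, h2⟩ := euclid_aux p.1.2 hq1' hcon'
          exact hp ⟨h1, Fin.ext h2⟩)]
  rw [key]
  exact (Matrix.charpoly_reindex E.symm (Algebra.leftMulMatrix pb.basis pb.gen)).trans 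
    ((charpoly_leftMulMatrix pb).trans (AdjoinRoot.minpoly_powerBasis_gen_of_monic hmonic))
end

section
/- For every primitive polynomial f of degree mn over F_q, there exists a block companion matrix T̃ ∈ GL_{mn}(F_q) (of MRMM type) whose characteristic polynomial is f and whose multiplicative order in GL_{mn}(F_q) is q^{mn} − 1. -/
open Polynomial Matrix

theorem exists_blockCompanion_of_primitive {K : Type*} [Field K] [Fintype K]
    (m n : ℕ) (hm : 0 < m) (hn : 0 < n)
    (f : Polynomial K) (hf : IsPrimitivePoly K f) (hdeg : f.natDegree = m * n) :
    ∃ C : Fin n → Matrix (Fin m) (Fin m) K,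
      IsUnit (blockCompanion m n C) ∧
      (blockCompanion m n C).charpoly = f ∧
      orderOf (blockCompanion m n C) = Fintype.card K ^ (m * n) - 1 := by
  obtain ⟨hmonic, hirr, hord⟩ := hf
  haveI : Fact (Irreducible f) := ⟨hirr⟩
  have hf0 : f ≠ 0 := hmonic.ne_zero
  set pb := AdjoinRoot.powerBasis hf0 with hpb
  have hdim : pb.dim = m * n := hdeg
  -- the reindexing equivalence
  let e : Fin n × Fin m ≃ Fin pb.dim :=
    (Equiv.prodComm (Fin n) (Fin m)).trans (finProdFinEquiv.trans (finCongr hdim.symm))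
  have he : ∀ p : Fin n × Fin m, ((e p : Fin pb.dim) : ℕ) = p.1 + n * p.2 := by
    intro p; rfl
  let A : Matrix (Fin pb.dim) (Fin pb.dim) K := Algebra.leftMulMatrix pb.basis pb.gen
  refine ⟨fun p1 p2 q2 => A (e (p1, p2)) (e (⟨n - 1, Nat.sub_lt hn Nat.one_pos⟩, q2)), ?_⟩
  have key : blockCompanion m n
      (fun p1 p2 q2 => A (e (p1, p2)) (e (⟨n - 1, Nat.sub_lt hn Nat.one_pos⟩, q2)))
      = A.submatrix e e := by
    ext ⟨p1, p2⟩ ⟨q1, q2⟩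
    simp only [blockCompanion, Matrix.of_apply, Matrix.submatrix_apply]
    by_cases hq : (q1 : ℕ) = n - 1
    · rw [if_pos hq]
      have hq' : q1 = (⟨n - 1, Nat.sub_lt hn Nat.one_pos⟩ : Fin n) := Fin.ext hq
      rw [hq']
    · rw [if_neg hq]
      have hq1 : (q1 : ℕ) + 1 < n := by
        rcases Nat.lt_or_ge ((q1 : ℕ) + 1) n with h | h
        · exact h
        · exact absurd (le_antisymm (Nat.le_sub_one_of_lt q1.isLt)
            (Nat.sub_le_of_le_add h)) hq
      -- the column index and its successor
      have hjlt : ((e (q1, q2) : Fin pb.dim) : ℕ) + 1 < pb.dim := by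
        rw [he, hdim, Nat.mul_comm m n]
        calc (q1 : ℕ) + n * q2 + 1 = ((q1 : ℕ) + 1) + n * q2 := by ring
          _ < n + n * q2 := Nat.add_lt_add_right hq1 _
          _ = n * ((q2 : ℕ) + 1) := by ring
          _ ≤ n * m := Nat.mul_le_mul_left n q2.isLt
      have hA : A (e (p1, p2)) (e (q1, q2))
          = if e (⟨(q1 : ℕ) + 1, hq1⟩, q2) = e (p1, p2) then (1 : K) else 0 := by
        have hmul : pb.gen * pb.basis (e (q1, q2))
            = pb.basis ⟨((e (q1, q2) : Fin pb.dim) : ℕ) + 1, hjlt⟩ := by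
          simp only [PowerBasis.coe_basis]
          rw [← pow_succ']
        show Algebra.leftMulMatrix pb.basis pb.gen _ _ = _
        rw [Algebra.leftMulMatrix_eq_repr_mul, hmul, Module.Basis.repr_self,
          Finsupp.single_apply]
        congr 1
        have : (⟨((e (q1, q2) : Fin pb.dim) : ℕ) + 1, hjlt⟩ : Fin pb.dim)
            = e (⟨(q1 : ℕ) + 1, hq1⟩, q2) := by
          apply Fin.ext
          simp only [Fin.val_mk, he]
          ring
        rw [this]
      rw [hA]
      by_cases hc : (p1 : ℕ) = (q1 : ℕ) + 1 ∧ p2 = q2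
      · rw [if_pos hc]
        rw [if_pos]
        congr 1
        exact Prod.ext (Fin.ext hc.1.symm) hc.2.symm
      · rw [if_neg hc, if_neg]
        intro h
        apply hc
        have := e.injective h
        obtain ⟨h1, h2⟩ := Prod.mk.injEq .. ▸ this
        exact ⟨(Fin.ext_iff.mp h1).symm, h2.symm⟩
  rw [key]
  -- characteristic polynomial
  have hsub : A.submatrix e e = Matrix.reindex e.symm e.symm A := by
    rw [Matrix.reindex_apply]
    simp
  have hcharA : A.charpoly = f := by
    rw [charpoly_leftMulMatrix, hpb, AdjoinRoot.minpoly_powerBasis_gen_of_monic hmonic]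
  have hchar : (A.submatrix e e).charpoly = f := by
    rw [hsub, Matrix.charpoly_reindex, hcharA]
  -- order
  have hordgen : orderOf pb.gen = Fintype.card K ^ (m * n) - 1 := by
    rw [← hdeg]
    exact hord
  have hordA : orderOf A = Fintype.card K ^ (m * n) - 1 := by
    rw [← hordgen]
    exact orderOf_injective (Algebra.leftMulMatrix pb.basis).toRingHom.toMonoidHom
      (Algebra.leftMulMatrix_injective pb.basis) pb.gen
  have hordsub : orderOf (A.submatrix e e) = Fintype.card K ^ (m * n) - 1 := by
    rw [hsub, ← hordA]
    exact orderOf_injective (Matrix.reindexAlgEquiv K K e.symm).toRingEquiv.toMonoidHom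
      (Matrix.reindexAlgEquiv K K e.symm).injective A
  refine ⟨?_, hchar, hordsub⟩
  have hne : orderOf (A.submatrix e e) ≠ 0 := by
    rw [hordsub]
    have h2 : 2 ≤ Fintype.card K := Fintype.one_lt_card
    have : 2 ≤ Fintype.card K ^ (m * n) := by
      calc 2 = 2 ^ 1 := (pow_one 2).symm
        _ ≤ Fintype.card K ^ (m * n) :=
          Nat.pow_le_pow_left h2 (m * n) |>.trans' (Nat.pow_le_pow_right (by norm_num)
            (Nat.one_le_iff_ne_zero.mpr (Nat.mul_ne_zero hm.ne' hn.ne')))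
    omega
  have hfin : IsOfFinOrder (A.submatrix e e) := by
    by_contra hcon
    exact hne (orderOf_eq_zero_iff.mpr hcon)
  exact hfin.isUnit
end

section
/- Let T ∈ GL_{mn}(F_q) be a block companion matrix of MRMM type with C_0 invertible. Then the order of T in GL_{mn}(F_q) is q^{mn} − 1 if and only if the characteristic polynomial det(M(X)) of T is a primitive polynomial of degree mn over F_q, where M(X) = I_m X^n − C_{n-1}X^{n-1} − ⋯ − C_0. -/
open Polynomial Matrix

namespace BCProof

variable {K : Type*} [Field K] (m n : ℕ) (C : Fin n → Matrix (Fin m) (Fin m) K)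

/-- block entries of the intermediate matrix -/
noncomputable def Nent (j : ℕ) : Matrix (Fin m) (Fin m) K[X] :=
  Matrix.of fun a b =>
    (if a = b then (X : K[X]) ^ (n - j) else 0)
      - ∑ l : Fin n, if j ≤ (l : ℕ) then (X : K[X]) ^ ((l : ℕ) - j) * Polynomial.C (C l a b) else 0

noncomputable def Lmat : Matrix (Fin n × Fin m) (Fin n × Fin m) K[X] :=
  Matrix.of fun p q =>
    if (p.1 : ℕ) ≤ (q.1 : ℕ) ∧ p.2 = q.2 then (X : K[X]) ^ ((q.1 : ℕ) - (p.1 : ℕ)) else 0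

noncomputable def Bp : Matrix (Fin n × Fin m) (Fin n × Fin m) K[X] :=
  Matrix.of fun p q =>
    if (q.1 : ℕ) = n - 1 then Nent m n C (p.1 : ℕ) p.2 q.2
    else if (p.1 : ℕ) = (q.1 : ℕ) + 1 ∧ p.2 = q.2 then -1 else 0

noncomputable def Wmat : Matrix (Fin n × Fin m) (Fin n × Fin m) K[X] :=
  Matrix.of fun p q =>
    (if p = q then 1 else 0)
      + (if (q.1 : ℕ) = n - 1 ∧ (p.1 : ℕ) < n - 1 then Nent m n C ((p.1 : ℕ) + 1) p.2 q.2 else 0)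

noncomputable def Bpp : Matrix (Fin n × Fin m) (Fin n × Fin m) K[X] :=
  Matrix.of fun p q =>
    if (q.1 : ℕ) = n - 1 then (if (p.1 : ℕ) = 0 then Nent m n C 0 p.2 q.2 else 0)
    else if (p.1 : ℕ) = (q.1 : ℕ) + 1 ∧ p.2 = q.2 then -1 else 0

lemma det_Lmat : (Lmat m n (K := K)).det = 1 := by
  have hL : (Lmat m n (K := K)).BlockTriangular Prod.fst := by
    rintro p q h
    simp only [Lmat, of_apply]
    rw [if_neg]
    rintro ⟨h1, -⟩
    exact absurd h1 (not_le.2 (Fin.lt_def.mp h))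
  rw [hL.det]
  refine Finset.prod_eq_one fun i _ => ?_
  have h1 : (Lmat m n (K := K)).toSquareBlock Prod.fst i = 1 := by
    ext ⟨p, hp⟩ ⟨q, hq⟩
    simp only [Matrix.toSquareBlock_def, Lmat, of_apply, Matrix.one_apply]
    have h2 : p.1 = q.1 := by rw [hp, hq]
    by_cases h3 : p.2 = q.2
    · rw [if_pos ⟨le_of_eq (by rw [h2]), h3⟩, if_pos (by
        exact Subtype.ext (Prod.ext h2 h3))]
      simp [h2]
    · rw [if_neg (by rintro ⟨-, h⟩; exact h3 h), if_neg (by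
        intro h; apply h3; exact congrArg Prod.snd (congrArg Subtype.val h))]
  rw [h1, det_one]

lemma det_Wmat : (Wmat m n C).det = 1 := by
  have hW : (Wmat m n C).BlockTriangular Prod.fst := by
    rintro p q h
    have hne : p ≠ q := by rintro rfl; exact lt_irrefl _ h
    simp only [Wmat, of_apply, if_neg hne, zero_add]
    rw [if_neg]
    rintro ⟨h1, h2⟩
    rw [Fin.lt_def] at h
    omega
  rw [hW.det]
  refine Finset.prod_eq_one fun i _ => ?_
  have h1 : (Wmat m n C).toSquareBlock Prod.fst i = 1 := by
    ext ⟨p, hp⟩ ⟨q, hq⟩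
    have h2 : p.1 = q.1 := by rw [hp, hq]
    simp only [Matrix.toSquareBlock_def, Wmat, of_apply, Matrix.one_apply]
    have h4 : ¬((q.1 : ℕ) = n - 1 ∧ (p.1 : ℕ) < n - 1) := by rw [h2]; omega
    rw [if_neg h4, add_zero]
    by_cases h3 : p.2 = q.2
    · rw [if_pos (Prod.ext h2 h3), if_pos (Subtype.ext (Prod.ext h2 h3))]
    · rw [if_neg (fun h => h3 (congrArg Prod.snd h)),
        if_neg (fun h => h3 (congrArg Prod.snd (congrArg Subtype.val h)))]
  rw [h1, det_one]


lemma claimA (hn : 0 < n) :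
    Lmat m n (K := K) * charmatrix (blockCompanion m n C) = Bp m n C := by
  ext ⟨j, a⟩ ⟨k, b⟩ : 2
  rw [Matrix.mul_apply, Fintype.sum_prod_type]
  have key : ∀ l : Fin n, ∀ c : Fin m,
      Lmat m n (K := K) (j, a) (l, c) * charmatrix (blockCompanion m n C) (l, c) (k, b)
      = if a = c then
          (if (j : ℕ) ≤ (l : ℕ) then (X : K[X]) ^ ((l : ℕ) - (j : ℕ)) else 0)
            * charmatrix (blockCompanion m n C) (l, a) (k, b) else 0 := by
    intro l c
    simp only [Lmat, of_apply]
    by_cases h : a = c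
    · subst h
      by_cases h2 : (j : ℕ) ≤ (l : ℕ) <;> simp [h2]
    · simp [h]
  simp only [key]
  simp only [Finset.sum_ite_eq, Finset.mem_univ, if_true]
  have hchar : ∀ l : Fin n, charmatrix (blockCompanion m n C) (l, a) (k, b)
      = (if (l, a) = (k, b) then (X : K[X]) else 0)
        - Polynomial.C (blockCompanion m n C (l, a) (k, b)) := by
    intro l
    rw [charmatrix_apply, Matrix.diagonal_apply]
  by_cases hk : (k : ℕ) = n - 1
  · -- last block column
    rw [Bp, of_apply, if_pos hk]
    have hT : ∀ l : Fin n, blockCompanion m n C (l, a) (k, b) = C l a b := by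
      intro l; simp only [blockCompanion, of_apply, if_pos hk]
    have hterm : ∀ l : Fin n,
        (if (j : ℕ) ≤ (l : ℕ) then (X : K[X]) ^ ((l : ℕ) - (j : ℕ)) else 0)
          * charmatrix (blockCompanion m n C) (l, a) (k, b)
        = (if l = k ∧ a = b then (X : K[X]) ^ (n - (j : ℕ)) else 0)
          - (if (j : ℕ) ≤ (l : ℕ) then
              (X : K[X]) ^ ((l : ℕ) - (j : ℕ)) * Polynomial.C (C l a b) else 0) := by
      intro l
      rw [hchar l, hT l, mul_sub]
      congr 1
      · by_cases h1 : l = k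
        · subst h1
          have hj : (j : ℕ) ≤ (l : ℕ) := by have := j.isLt; omega
          by_cases h2 : a = b
          · have hpow : (X : K[X]) ^ ((l : ℕ) - (j : ℕ)) * X
                = (X : K[X]) ^ (n - (j : ℕ)) := by
              rw [← pow_succ]; congr 1; have := j.isLt; omega
            simp [hj, h2, hpow]
          · simp [h2]
        · simp [h1]
      · by_cases h2 : (j : ℕ) ≤ (l : ℕ) <;> simp [h2]
    rw [Finset.sum_congr rfl fun l _ => hterm l, Finset.sum_sub_distrib]
    simp only [ite_and, Finset.sum_ite_eq', Finset.mem_univ, if_true]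
    rw [Nent, of_apply]
  · -- other block columns
    rw [Bp, of_apply, if_neg hk]
    have hkn : (k : ℕ) + 1 < n := by have := k.isLt; omega
    set k₁ : Fin n := ⟨(k : ℕ) + 1, hkn⟩ with hk₁
    have hT : ∀ l : Fin n, blockCompanion m n C (l, a) (k, b)
        = if l = k₁ ∧ a = b then 1 else 0 := by
      intro l
      simp only [blockCompanion, of_apply, if_neg hk]
      congr 1
      simp [hk₁, Fin.ext_iff]
    have hterm : ∀ l : Fin n,
        (if (j : ℕ) ≤ (l : ℕ) then (X : K[X]) ^ ((l : ℕ) - (j : ℕ)) else 0)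
          * charmatrix (blockCompanion m n C) (l, a) (k, b)
        = (if l = k ∧ (a = b ∧ (j : ℕ) ≤ (k : ℕ)) then
              (X : K[X]) ^ ((k : ℕ) + 1 - (j : ℕ)) else 0)
          - (if l = k₁ ∧ (a = b ∧ (j : ℕ) ≤ (k : ℕ) + 1) then
              (X : K[X]) ^ ((k : ℕ) + 1 - (j : ℕ)) else 0) := by
      intro l
      rw [hchar l, hT l, mul_sub]
      congr 1
      · by_cases h1 : l = k
        · subst h1
          by_cases h2 : a = b
          · by_cases h3 : (j : ℕ) ≤ (l : ℕ)
            · have hpow : (X : K[X]) ^ ((l : ℕ) - (j : ℕ)) * X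
                  = (X : K[X]) ^ ((l : ℕ) + 1 - (j : ℕ)) := by
                rw [← pow_succ]; congr 1; omega
              simp [h2, h3, hpow]
            · simp [h2, h3]
          · simp [h2]
        · simp [h1]
      · by_cases h1 : l = k₁
        · subst h1
          by_cases h2 : a = b
          · have hv : (k₁ : ℕ) = (k : ℕ) + 1 := rfl
            by_cases h3 : (j : ℕ) ≤ (k : ℕ) + 1
            · have h4 : (j : ℕ) ≤ (k₁ : ℕ) := by omega
              have h5 : ((k₁ : ℕ) - (j : ℕ)) = (k : ℕ) + 1 - (j : ℕ) := by omega
              simp [h2, h3, h4, h5]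
            · have h4 : ¬ (j : ℕ) ≤ (k₁ : ℕ) := by omega
              simp [h2, h3, h4]
          · simp [h2]
        · simp [h1]
    rw [Finset.sum_congr rfl fun l _ => hterm l, Finset.sum_sub_distrib]
    simp only [ite_and, Finset.sum_ite_eq', Finset.mem_univ, if_true]
    by_cases h2 : a = b
    · by_cases h3 : (j : ℕ) ≤ (k : ℕ)
      · have h5 : ¬ ((j : ℕ) = (k : ℕ) + 1) := by omega
        have h4 : (j : ℕ) ≤ (k : ℕ) + 1 := by omega
        simp [h2, h3, h4, h5]
      · by_cases h4 : (j : ℕ) = (k : ℕ) + 1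
        · have h6 : (k : ℕ) + 1 - (j : ℕ) = 0 := by omega
          simp [h2, h3, h4, h6]
        · have h5 : ¬ ((j : ℕ) ≤ (k : ℕ) + 1) := by omega
          simp [h2, h3, h4, h5]
    · simp [h2]


lemma claimB (hn : 0 < n) : Bp m n C * Wmat m n C = Bpp m n C := by
  ext ⟨j, a⟩ ⟨k, b⟩ : 2
  rw [Matrix.mul_apply]
  have hsplit : ∀ p : Fin n × Fin m,
      Bp m n C (j, a) p * Wmat m n C p (k, b)
      = (if p = (k, b) then Bp m n C (j, a) p else 0)
        + Bp m n C (j, a) p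
          * (if (k : ℕ) = n - 1 ∧ (p.1 : ℕ) < n - 1 then
              Nent m n C ((p.1 : ℕ) + 1) p.2 b else 0) := by
    intro p
    rw [Wmat, of_apply, mul_add]
    congr 1
    by_cases h : p = (k, b) <;> simp [h]
  rw [Finset.sum_congr rfl fun p _ => hsplit p, Finset.sum_add_distrib]
  rw [Finset.sum_ite_eq' Finset.univ ((k, b) : Fin n × Fin m)
    (fun p => Bp m n C (j, a) p), if_pos (Finset.mem_univ _)]
  by_cases hk : (k : ℕ) = n - 1
  · -- k is the last block column
    by_cases hj : (j : ℕ) = 0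
    · -- j = 0 : the sum vanishes
      rw [Finset.sum_eq_zero, add_zero]
      · simp [Bp, Bpp, of_apply, hk, hj]
      · rintro ⟨r, d⟩ -
        dsimp only
        by_cases hr : (r : ℕ) = n - 1
        · rw [if_neg (by rintro ⟨-, h⟩; omega), mul_zero]
        · have h1 : ¬((j : ℕ) = (r : ℕ) + 1 ∧ a = d) := by rintro ⟨h, -⟩; omega
          simp only [Bp, of_apply, if_neg hr, if_neg h1, zero_mul]
    · -- j ≥ 1 : exactly one term contributes, cancelling
      have hj1 : (j : ℕ) - 1 < n := by have := j.isLt; omega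
      have hsum : ∑ p : Fin n × Fin m, Bp m n C (j, a) p
          * (if (k : ℕ) = n - 1 ∧ (p.1 : ℕ) < n - 1 then
              Nent m n C ((p.1 : ℕ) + 1) p.2 b else 0)
          = - Nent m n C (j : ℕ) a b := by
        rw [Finset.sum_eq_single ((⟨(j : ℕ) - 1, hj1⟩, a) : Fin n × Fin m)]
        · dsimp only
          have hr : ¬ ((((⟨(j : ℕ) - 1, hj1⟩ : Fin n) : ℕ)) = n - 1) := by
            have := j.isLt; simp; omega
          have hlt : (((⟨(j : ℕ) - 1, hj1⟩ : Fin n) : ℕ)) < n - 1 := by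
            have := j.isLt; simp; omega
          rw [Bp, of_apply, if_neg hr, if_pos ⟨(by simp; omega), rfl⟩,
            if_pos ⟨hk, hlt⟩]
          have : (((⟨(j : ℕ) - 1, hj1⟩ : Fin n) : ℕ)) + 1 = (j : ℕ) := by simp; omega
          rw [this, neg_one_mul]
        · rintro ⟨r, d⟩ - hne
          dsimp only
          by_cases hr : (r : ℕ) = n - 1
          · rw [if_neg (by rintro ⟨-, h⟩; omega), mul_zero]
          · by_cases h2 : (j : ℕ) = (r : ℕ) + 1 ∧ a = d
            · exfalso
              apply hne
              have : r = (⟨(j : ℕ) - 1, hj1⟩ : Fin n) := by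
                apply Fin.ext; simp; omega
              rw [this, h2.2]
            · rw [Bp, of_apply, if_neg hr, if_neg h2, zero_mul]
        · intro h; exact absurd (Finset.mem_univ _) h
      rw [hsum, Bp, Bpp, of_apply, of_apply, if_pos hk, if_pos hk, if_neg hj,
        add_neg_cancel]
  · -- k is not the last block column: the correction sum vanishes
    rw [Finset.sum_eq_zero, add_zero]
    · simp only [Bp, Bpp, of_apply, if_neg hk]
    · rintro p -
      rw [if_neg (by rintro ⟨h, -⟩; exact hk h), mul_zero]


lemma rot_val (n' : ℕ) (j : Fin (n' + 1)) :
    (((finRotate (n' + 1)).symm j : Fin (n' + 1)) : ℕ)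
      = if (j : ℕ) = 0 then n' else (j : ℕ) - 1 := by
  have h : ((finRotate (n' + 1)).symm j) + 1 = j := by
    rw [← finRotate_succ_apply]; exact Equiv.apply_symm_apply _ _
  have hv := Fin.val_add_one ((finRotate (n' + 1)).symm j)
  rw [h] at hv
  by_cases hl : (finRotate (n' + 1)).symm j = Fin.last n'
  · rw [hv, if_pos hl, if_pos rfl, hl]
    rfl
  · rw [hv, if_neg hl]
    rw [if_neg (by omega)]
    omega

lemma det_Bpp (hn : 0 < n) : (Bpp m n C).det = (Nent m n C 0).det := by
  obtain ⟨n', rfl⟩ : ∃ n', n = n' + 1 := ⟨n - 1, by omega⟩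
  set σ : Equiv.Perm (Fin (n' + 1)) := (finRotate (n' + 1)).symm with hσ
  have hval : ∀ j : Fin (n' + 1), ((σ j : Fin (n' + 1)) : ℕ)
      = if (j : ℕ) = 0 then n' else (j : ℕ) - 1 := fun j => rot_val n' j
  set Dblk : Fin (n' + 1) → Matrix (Fin m) (Fin m) K[X] :=
    fun r => if (r : ℕ) = n' then Nent m (n' + 1) C 0 else -1 with hDblk
  set τ : Equiv.Perm (Fin (n' + 1) × Fin m) :=
    Equiv.prodCongrLeft (fun _ : Fin m => σ) with hτ
  set Dmat : Matrix (Fin (n' + 1) × Fin m) (Fin (n' + 1) × Fin m) K[X] :=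
    (blockDiagonal Dblk).submatrix (⇑(Equiv.prodComm (Fin (n' + 1)) (Fin m)))
      (⇑(Equiv.prodComm (Fin (n' + 1)) (Fin m))) with hDmat
  have h1 : Bpp m (n' + 1) C = Dmat.submatrix (⇑τ) id := by
    ext ⟨j, a⟩ ⟨k, b⟩ : 2
    have hτapp : τ (j, a) = (σ j, a) := rfl
    rw [Matrix.submatrix_apply, hτapp, id_eq, hDmat, Matrix.submatrix_apply]
    have hswap : (Equiv.prodComm (Fin (n' + 1)) (Fin m)) (σ j, a) = (a, σ j) := rfl
    have hswap2 : (Equiv.prodComm (Fin (n' + 1)) (Fin m)) (k, b) = (b, k) := rfl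
    rw [hswap, hswap2, Matrix.blockDiagonal_apply' Dblk a (σ j) b k]
    have hBpp : Bpp m (n' + 1) C (j, a) (k, b)
        = if (k : ℕ) = n' + 1 - 1 then
            (if (j : ℕ) = 0 then Nent m (n' + 1) C 0 a b else 0)
          else if (j : ℕ) = (k : ℕ) + 1 ∧ a = b then -1 else 0 := by
      simp only [Bpp, of_apply]
    rw [hBpp]
    by_cases hj : (j : ℕ) = 0
    · have hσj : ((σ j : Fin (n' + 1)) : ℕ) = n' := by rw [hval j, if_pos hj]
      by_cases hk : (k : ℕ) = n'
      · have : (σ j) = k := Fin.ext (by rw [hσj, hk])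
        rw [if_pos (by omega : (k : ℕ) = n' + 1 - 1), if_pos hj, if_pos this]
        simp only [hDblk]
        rw [if_pos hσj]
      · have hne : ¬ ((σ j) = k) := fun hh => hk (by rw [← congrArg Fin.val hh, hσj])
        rw [if_neg (by omega : ¬ ((k : ℕ) = n' + 1 - 1)),
          if_neg (by rintro ⟨hh, -⟩; omega), if_neg hne]
    · have hσj : ((σ j : Fin (n' + 1)) : ℕ) = (j : ℕ) - 1 := by rw [hval j, if_neg hj]
      have hjlt := j.isLt
      by_cases hk : (k : ℕ) = n'
      · have hne : ¬ ((σ j) = k) := by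
          intro hh
          have := congrArg Fin.val hh
          rw [hσj, hk] at this
          omega
        rw [if_pos (by omega : (k : ℕ) = n' + 1 - 1), if_neg hj, if_neg hne]
      · rw [if_neg (by omega : ¬ ((k : ℕ) = n' + 1 - 1))]
        by_cases h2 : (σ j) = k
        · have hv2 := congrArg Fin.val h2
          rw [hσj] at hv2
          have hjk : (j : ℕ) = (k : ℕ) + 1 := by omega
          rw [if_pos h2]
          simp only [hDblk]
          rw [if_neg (show ¬ (((σ j : Fin (n' + 1)) : ℕ) = n') by omega)]
          by_cases h3 : a = b
          · rw [if_pos ⟨hjk, h3⟩]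
            simp [Matrix.neg_apply, Matrix.one_apply, h3]
          · rw [if_neg (by rintro ⟨-, hh⟩; exact h3 hh)]
            simp [Matrix.neg_apply, Matrix.one_apply, h3]
        · have : ¬ ((j : ℕ) = (k : ℕ) + 1 ∧ a = b) := by
            rintro ⟨hh, -⟩
            apply h2
            apply Fin.ext
            rw [hσj]
            omega
          rw [if_neg this, if_neg h2]
  rw [h1, Matrix.det_permute, hDmat, Matrix.det_submatrix_equiv_self,
    Matrix.det_blockDiagonal]
  rw [Fin.prod_univ_castSucc]
  have hlast : Dblk (Fin.last n') = Nent m (n' + 1) C 0 := by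
    rw [hDblk]; simp
  have hcast : ∀ r : Fin n', Dblk r.castSucc = (-1 : Matrix (Fin m) (Fin m) K[X]) := by
    intro r
    simp only [hDblk]
    have hv : ((r.castSucc : Fin (n' + 1)) : ℕ) = (r : ℕ) := rfl
    rw [if_neg (show ¬ (((r.castSucc : Fin (n' + 1)) : ℕ) = n') by rw [hv]; omega)]
  rw [hlast, Finset.prod_congr rfl (fun r _ => by rw [hcast r])]
  rw [Finset.prod_const]
  have hdetneg : (-1 : Matrix (Fin m) (Fin m) K[X]).det = (-1 : K[X]) ^ m := by
    have : (-1 : Matrix (Fin m) (Fin m) K[X]) = -(1 : Matrix (Fin m) (Fin m) K[X]) := rfl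
    rw [this, Matrix.det_neg, Matrix.det_one, mul_one, Fintype.card_fin]
  rw [hdetneg]
  have hsign : Equiv.Perm.sign τ = ((-1 : ℤˣ) ^ n') ^ m := by
    rw [hτ, Equiv.Perm.sign_prodCongrLeft]
    rw [hσ]
    rw [Finset.prod_congr rfl (fun _ _ => Equiv.Perm.sign_symm _)]
    rw [Finset.prod_congr rfl (fun _ _ => sign_finRotate (n' + 1)), Nat.add_sub_cancel]
    rw [Finset.prod_const, Finset.card_univ, Fintype.card_fin]
  rw [hsign]
  push_cast
  rw [Finset.card_univ, Fintype.card_fin]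
  have : ((-1 : K[X]) ^ n') ^ m * ((-1 : K[X]) ^ m) ^ n' = 1 := by
    rw [← pow_mul, ← pow_mul, mul_comm m n', ← pow_add, ← two_mul, pow_mul]
    norm_num
  rw [← mul_assoc, this, one_mul]

theorem charpoly_blockCompanion (hn : 0 < n) :
    (blockCompanion m n C).charpoly
      = ((X : K[X]) ^ n • (1 : Matrix (Fin m) (Fin m) K[X])
          - ∑ j : Fin n, (X : K[X]) ^ (j : ℕ) • (C j).map Polynomial.C).det := by
  have hM : ((X : K[X]) ^ n • (1 : Matrix (Fin m) (Fin m) K[X])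
      - ∑ j : Fin n, (X : K[X]) ^ (j : ℕ) • (C j).map Polynomial.C) = Nent m n C 0 := by
    ext a b
    simp only [Matrix.sub_apply, Matrix.smul_apply, Matrix.one_apply, Matrix.sum_apply,
      Matrix.map_apply, Nent, of_apply, smul_eq_mul, mul_ite, mul_one, mul_zero,
      Nat.sub_zero, Nat.zero_le, if_true]
  rw [hM]
  have hA := congrArg Matrix.det (claimA m n C hn)
  rw [Matrix.det_mul, det_Lmat, one_mul] at hA
  have hB := congrArg Matrix.det (claimB m n C hn)
  rw [Matrix.det_mul, det_Wmat, mul_one] at hB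
  have : Matrix.charpoly (blockCompanion m n C) = (Bpp m n C).det := by
    rw [Matrix.charpoly, hA, hB]
  rw [this, det_Bpp m n C hn]


theorem orderOf_matrix_iff_primitive {ι : Type*} [Fintype K] [Fintype ι] [DecidableEq ι]
    [Nonempty ι] (M : Matrix ι ι K) :
    orderOf M = Fintype.card K ^ Fintype.card ι - 1 ↔ IsPrimitivePoly K M.charpoly := by
  classical
  have hq : 1 < Fintype.card K := Fintype.one_lt_card
  have hN : 0 < Fintype.card ι := Fintype.card_pos
  have hfmon : M.charpoly.Monic := M.charpoly_monic
  have hf0 : M.charpoly ≠ 0 := hfmon.ne_zero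
  have hdeg : M.charpoly.natDegree = Fintype.card ι := M.charpoly_natDegree_eq_dim
  have hk1 : Fintype.card K ^ Fintype.card ι - 1 + 1 = Fintype.card K ^ Fintype.card ι := by
    have : 0 < Fintype.card K ^ Fintype.card ι := pow_pos (by omega) _
    omega
  have hk0 : Fintype.card K ^ Fintype.card ι - 1 ≠ 0 := by
    have : Fintype.card K ≤ Fintype.card K ^ Fintype.card ι :=
      Nat.le_self_pow hN.ne' _
    omega
  -- the lifted map on the quotient by the characteristic polynomial
  have haev : ∀ g ∈ Ideal.span {M.charpoly}, (aeval M) g = 0 := by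
    intro g hg
    rw [Ideal.mem_span_singleton] at hg
    obtain ⟨c, rfl⟩ := hg
    rw [_root_.map_mul, M.aeval_self_charpoly, zero_mul]
  set β : AdjoinRoot M.charpoly →+* Matrix ι ι K :=
    Ideal.Quotient.lift (Ideal.span {M.charpoly}) (aeval M).toRingHom haev with hβ
  have hβmk : ∀ g : K[X], β (AdjoinRoot.mk M.charpoly g) = aeval M g := by
    intro g
    exact Ideal.Quotient.lift_mk (Ideal.span {M.charpoly}) (aeval M).toRingHom haev
  have hβroot : β (AdjoinRoot.root M.charpoly) = M := by
    rw [show AdjoinRoot.root M.charpoly = AdjoinRoot.mk M.charpoly Polynomial.X from rfl,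
      hβmk, aeval_X]
  constructor
  · -- order of M maximal → charpoly primitive
    intro hM
    set k := Fintype.card K ^ Fintype.card ι - 1 with hkdef
    have hMk : M ^ k = 1 := by rw [← hM]; exact pow_orderOf_eq_one M
    have hU : IsUnit M := IsUnit.of_pow_eq_one hMk hk0
    obtain ⟨u, hu⟩ := hU
    have hUM : IsUnit M := ⟨u, hu⟩
    have hordu : orderOf u = k := by rw [← orderOf_units, hu, hM]
    have hpowinj : ∀ i j : ℕ, i < k → j < k → M ^ i = M ^ j → i = j := by
      intro i j hi hj hij
      have hup : u ^ i = u ^ j := by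
        ext
        rw [Units.val_pow_eq_pow_val, Units.val_pow_eq_pow_val, hu, hij]
      exact pow_injOn_Iio_orderOf (by rwa [hordu]) (by rwa [hordu]) hup
    have hint : IsIntegral K M := ⟨M.charpoly, hfmon, M.aeval_self_charpoly⟩
    have hpmon : (minpoly K M).Monic := minpoly.monic hint
    have hp0 : minpoly K M ≠ 0 := hpmon.ne_zero
    have hpdvd : minpoly K M ∣ M.charpoly := M.minpoly_dvd_charpoly
    -- cardinality of K[x]/(g) for monic nonzero g, and injectivity of the lift
    have hcard : ∀ (g : K[X]) (hg : g ≠ 0), ∃ _ : Fintype (AdjoinRoot g),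
        Fintype.card (AdjoinRoot g) = Fintype.card K ^ g.natDegree := by
      intro g hg
      haveI : Module.Finite K (AdjoinRoot g) := (AdjoinRoot.powerBasis hg).finite
      haveI : Finite (AdjoinRoot g) := Module.finite_of_finite K
      letI fA : Fintype (AdjoinRoot g) := Fintype.ofFinite _
      refine ⟨fA, ?_⟩
      rw [Module.card_eq_pow_finrank (K := K) (V := AdjoinRoot g),
        (AdjoinRoot.powerBasis hg).finrank, AdjoinRoot.powerBasis_dim]
    -- first: the minimal polynomial has full degree
    have hpdeg : (minpoly K M).natDegree = Fintype.card ι := by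
      have hdge : (minpoly K M).natDegree ≤ Fintype.card ι := by
        rw [← hdeg]; exact Polynomial.natDegree_le_of_dvd hpdvd hf0
      have haevp : ∀ g ∈ Ideal.span {minpoly K M}, (aeval M) g = 0 := by
        intro g hg
        rw [Ideal.mem_span_singleton] at hg
        obtain ⟨c, rfl⟩ := hg
        rw [_root_.map_mul, minpoly.aeval K M, zero_mul]
      set γ : AdjoinRoot (minpoly K M) →+* Matrix ι ι K :=
        Ideal.Quotient.lift (Ideal.span {minpoly K M}) (aeval M).toRingHom haevp with hγ
      have hγmk : ∀ g : K[X], γ (AdjoinRoot.mk (minpoly K M) g) = aeval M g := by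
        intro g
        exact Ideal.Quotient.lift_mk (Ideal.span {minpoly K M}) (aeval M).toRingHom haevp
      have hγinj : Function.Injective γ := by
        rw [injective_iff_map_eq_zero]
        intro x hx
        obtain ⟨g, rfl⟩ := AdjoinRoot.mk_surjective x
        rw [hγmk] at hx
        exact AdjoinRoot.mk_eq_zero.mpr (minpoly.dvd K M hx)
      obtain ⟨hfin, hcardp⟩ := hcard (minpoly K M) hp0
      have hle : k + 1 ≤ Fintype.card (AdjoinRoot (minpoly K M)) := by
        have hinj : Function.Injective (fun i : Fin (k + 1) =>
            if (i : ℕ) = k then (0 : AdjoinRoot (minpoly K M))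
            else (AdjoinRoot.root (minpoly K M)) ^ (i : ℕ)) := by
          have hγroot : γ (AdjoinRoot.root (minpoly K M)) = M := by
            rw [show AdjoinRoot.root (minpoly K M)
                = AdjoinRoot.mk (minpoly K M) Polynomial.X from rfl, hγmk, aeval_X]
          have hγpow : ∀ i : ℕ, γ ((AdjoinRoot.root (minpoly K M)) ^ i) = M ^ i := by
            intro i; rw [_root_.map_pow, hγroot]
          intro i j hij
          dsimp only at hij
          by_cases hi : (i : ℕ) = k <;> by_cases hj : (j : ℕ) = k
          · exact Fin.ext (by omega)
          · exfalso
            rw [if_pos hi, if_neg hj] at hij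
            have : (0 : Matrix ι ι K) = M ^ (j : ℕ) := by
              rw [← map_zero γ, hij, hγpow]
            exact (hUM.pow (j : ℕ)).ne_zero this.symm
          · exfalso
            rw [if_neg hi, if_pos hj] at hij
            have : (0 : Matrix ι ι K) = M ^ (i : ℕ) := by
              rw [← map_zero γ, ← hij, hγpow]
            exact (hUM.pow (i : ℕ)).ne_zero this.symm
          · rw [if_neg hi, if_neg hj] at hij
            have := congrArg γ hij
            rw [hγpow, hγpow] at this
            have hi2 := i.isLt
            have hj2 := j.isLt
            exact Fin.ext (hpowinj _ _ (by omega) (by omega) this)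
        have := Fintype.card_le_of_injective _ hinj
        rwa [Fintype.card_fin] at this
      rw [hcardp, hkdef, hk1] at hle
      have := (Nat.pow_le_pow_iff_right hq).mp hle
      omega
    -- hence minpoly = charpoly
    have hpf : minpoly K M = M.charpoly := by
      obtain ⟨c, hc⟩ := hpdvd
      have hc0 : c ≠ 0 := by rintro rfl; rw [mul_zero] at hc; exact hf0 hc
      have hcdeg : c.natDegree = 0 := by
        have h2 := congrArg Polynomial.natDegree hc
        rw [Polynomial.natDegree_mul hp0 hc0] at h2
        omega
      have hlc : (1 : K) = c.leadingCoeff := by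
        have := congrArg Polynomial.leadingCoeff hc
        rwa [Polynomial.leadingCoeff_mul, hpmon.leadingCoeff, hfmon.leadingCoeff,
          one_mul] at this
      have hc1 : c = 1 := by
        rw [Polynomial.eq_C_of_natDegree_eq_zero hcdeg]
        rw [Polynomial.leadingCoeff, hcdeg] at hlc
        rw [← hlc, _root_.map_one]
      rw [hc, hc1, mul_one]
    -- injectivity of β
    have hβinj : Function.Injective β := by
      rw [injective_iff_map_eq_zero]
      intro x hx
      obtain ⟨g, rfl⟩ := AdjoinRoot.mk_surjective x
      rw [hβmk] at hx
      exact AdjoinRoot.mk_eq_zero.mpr (hpf ▸ minpoly.dvd K M hx)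
    obtain ⟨hfin, hcardf⟩ := hcard M.charpoly hf0
    have hcardf' : Fintype.card (AdjoinRoot M.charpoly)
        = Fintype.card K ^ Fintype.card ι := by rw [hcardf, hdeg]
    -- the image of β is exactly {0} ∪ {Mⁱ}
    set Fs : Finset (Matrix ι ι K) := Finset.univ.image β with hFs
    set F : Finset (Matrix ι ι K) :=
      insert 0 ((Finset.range k).image fun i => M ^ i) with hF
    have hFsub : F ⊆ Fs := by
      intro x hx
      rw [hF, Finset.mem_insert] at hx
      rcases hx with rfl | hx
      · exact Finset.mem_image.mpr ⟨0, Finset.mem_univ _, map_zero β⟩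
      · obtain ⟨i, -, rfl⟩ := Finset.mem_image.mp hx
        exact Finset.mem_image.mpr ⟨(AdjoinRoot.root M.charpoly) ^ i, Finset.mem_univ _,
          by rw [_root_.map_pow, hβroot]⟩
    have hcardFs : Fs.card = Fintype.card K ^ Fintype.card ι := by
      rw [hFs, Finset.card_image_of_injective _ hβinj, Finset.card_univ, hcardf']
    have hcardF : F.card = Fintype.card K ^ Fintype.card ι := by
      rw [hF, Finset.card_insert_of_notMem, Finset.card_image_of_injOn, Finset.card_range]
      · omega
      · intro i hi j hj hij
        exact hpowinj i j (Finset.mem_range.mp hi) (Finset.mem_range.mp hj) hij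
      · intro h0
        obtain ⟨i, -, hi⟩ := Finset.mem_image.mp h0
        exact (hUM.pow i).ne_zero hi
    have hFeq : F = Fs := Finset.eq_of_subset_of_card_le hFsub (by omega)
    have hvalx : ∀ x : AdjoinRoot M.charpoly, x ≠ 0 → ∃ i, i < k ∧ β x = M ^ i := by
      intro x hx
      have hmem : β x ∈ Fs := Finset.mem_image.mpr ⟨x, Finset.mem_univ _, rfl⟩
      rw [← hFeq, hF, Finset.mem_insert] at hmem
      rcases hmem with h0 | hmem
      · exact absurd (hβinj (by rw [h0, map_zero])) hx
      · obtain ⟨i, hi, hix⟩ := Finset.mem_image.mp hmem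
        exact ⟨i, Finset.mem_range.mp hi, hix.symm⟩
    haveI : Nontrivial (AdjoinRoot M.charpoly) := by
      rw [← Fintype.one_lt_card_iff_nontrivial, hcardf']
      exact lt_of_lt_of_le hq (Nat.le_self_pow hN.ne' _)
    haveI hnzd : NoZeroDivisors (AdjoinRoot M.charpoly) := by
      constructor
      intro x y hxy
      by_contra hcon
      push_neg at hcon
      obtain ⟨i, -, hix⟩ := hvalx x hcon.1
      obtain ⟨j, -, hjy⟩ := hvalx y hcon.2
      have : (0 : Matrix ι ι K) = M ^ (i + j) := by
        rw [← map_zero β, ← hxy, _root_.map_mul, hix, hjy, pow_add]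
      exact (hUM.pow (i + j)).ne_zero this.symm
    haveI : IsDomain (AdjoinRoot M.charpoly) := NoZeroDivisors.to_isDomain _
    have hprime : Prime M.charpoly := by
      have hsp : (Ideal.span {M.charpoly} : Ideal K[X]).IsPrime := by
        rw [← Ideal.Quotient.isDomain_iff_prime]
        exact ‹IsDomain (AdjoinRoot M.charpoly)›
      exact (Ideal.span_singleton_prime hf0).mp hsp
    refine ⟨hfmon, hprime.irreducible, ?_⟩
    have hord : orderOf (AdjoinRoot.root M.charpoly) = k := by
      have h := orderOf_injective β.toMonoidHom hβinj (AdjoinRoot.root M.charpoly)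
      change orderOf (β (AdjoinRoot.root M.charpoly)) = _ at h
      rw [hβroot, hM] at h
      exact h.symm
    show orderOf (AdjoinRoot.mk M.charpoly Polynomial.X) = _
    rw [show AdjoinRoot.mk M.charpoly Polynomial.X = AdjoinRoot.root M.charpoly from rfl,
      hord, hdeg]
  · -- charpoly primitive → order of M maximal
    rintro ⟨-, hirr, hord⟩
    haveI : (Ideal.span {M.charpoly} : Ideal K[X]).IsMaximal :=
      PrincipalIdealRing.isMaximal_of_irreducible hirr
    letI : Field (AdjoinRoot M.charpoly) := Ideal.Quotient.field _
    haveI : Nontrivial (Matrix ι ι K) := inferInstance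
    haveI : IsSimpleRing (AdjoinRoot M.charpoly) := DivisionRing.isSimpleRing _
    have hβinj : Function.Injective β := β.injective
    have h2 : orderOf M = orderOf (AdjoinRoot.root M.charpoly) := by
      have h := orderOf_injective β.toMonoidHom hβinj (AdjoinRoot.root M.charpoly)
      change orderOf (β (AdjoinRoot.root M.charpoly)) = _ at h
      rw [hβroot] at h
      exact h
    rw [h2]
    have : orderOf (AdjoinRoot.mk M.charpoly Polynomial.X)
        = Fintype.card K ^ M.charpoly.natDegree - 1 := hord
    rw [show AdjoinRoot.root M.charpoly = AdjoinRoot.mk M.charpoly Polynomial.X from rfl,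
      this, hdeg]

end BCProof

theorem orderOf_blockCompanion_iff_primitive {K : Type*} [Field K] [Fintype K]
    (m n : ℕ) (hm : 0 < m) (hn : 0 < n)
    (C : Fin n → Matrix (Fin m) (Fin m) K)
    (hC0 : IsUnit (C ⟨0, hn⟩)) :
    orderOf (blockCompanion m n C) = Fintype.card K ^ (m * n) - 1 ↔
      (IsPrimitivePoly K
          (Matrix.det ((Polynomial.X (R := K)) ^ n • (1 : Matrix (Fin m) (Fin m) (Polynomial K))
            - ∑ j : Fin n, (Polynomial.X (R := K)) ^ (j : ℕ) • (C j).map Polynomial.C)) ∧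
        (Matrix.det ((Polynomial.X (R := K)) ^ n • (1 : Matrix (Fin m) (Fin m) (Polynomial K))
            - ∑ j : Fin n, (Polynomial.X (R := K)) ^ (j : ℕ) • (C j).map Polynomial.C)).natDegree
          = m * n) := by
  have hchar := BCProof.charpoly_blockCompanion m n C hn
  haveI : Nonempty (Fin n × Fin m) := ⟨(⟨0, hn⟩, ⟨0, hm⟩)⟩
  have hcardι : Fintype.card (Fin n × Fin m) = m * n := by
    simp [Fintype.card_prod, mul_comm]
  have hmain := BCProof.orderOf_matrix_iff_primitive (blockCompanion m n C)
  rw [hcardι] at hmain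
  constructor
  · intro h
    have h2 := hmain.mp h
    rw [hchar] at h2
    refine ⟨h2, ?_⟩
    rw [← hchar, (blockCompanion m n C).charpoly_natDegree_eq_dim, hcardι]
  · rintro ⟨h1, -⟩
    exact hmain.mpr (by rw [hchar]; exact h1)
end

section
/- If a multiple-recursive matrix method of order n over F_q^m is primitive, then for each coordinate j, the j-th coordinate sequence (s_i^{(j)}) over F_q has linear complexity exactly mn, i.e., its minimal polynomial over F_q has degree mn. -/
open Polynomial Matrix

namespace CLC

variable {K : Type*} [Field K]

/-- The shift operator on sequences. -/
def E : Module.End K (ℕ → K) where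
  toFun σ := fun i => σ (i + 1)
  map_add' := fun _ _ => rfl
  map_smul' := fun _ _ => rfl

lemma E_pow (k : ℕ) (σ : ℕ → K) (i : ℕ) : (E ^ k) σ i = σ (i + k) := by
  induction k generalizing σ i with
  | zero => rfl
  | succ k ih =>
      rw [pow_succ]
      show (E ^ k) (E σ) i = _
      rw [ih]
      show σ (i + k + 1) = σ (i + (k + 1))
      rw [add_assoc]

lemma aeval_E_apply (p : K[X]) (σ : ℕ → K) (i : ℕ) :
    (aeval E p : Module.End K (ℕ → K)) σ i
      = ∑ k ∈ Finset.range (p.natDegree + 1), p.coeff k * σ (i + k) := by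
  rw [Polynomial.aeval_eq_sum_range]
  simp [LinearMap.sum_apply, Finset.sum_apply, E_pow]

lemma seq_zero_of_coprime {p q : K[X]} (hc : IsCoprime p q) (σ : ℕ → K)
    (hp : (aeval E p : Module.End K (ℕ → K)) σ = 0)
    (hq : (aeval E q : Module.End K (ℕ → K)) σ = 0) : σ = 0 := by
  obtain ⟨u, v, huv⟩ := hc
  have h2 := congrArg (fun r => (aeval E r : Module.End K (ℕ → K)) σ) huv
  simpa [map_add, _root_.map_mul, Module.End.mul_apply, hp, hq] using h2.symm

variable {m n : ℕ} {C : Fin n → Matrix (Fin m) (Fin m) K}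

lemma mulVec_bc (hn : 0 < n) (v : Fin n × Fin m → K) (p : Fin n) (b : Fin m) :
    (blockCompanion m n C).mulVec v (p, b)
      = (∑ c, C p b c * v (⟨n - 1, by omega⟩, c))
        + (if h : 1 ≤ (p : ℕ) then v (⟨(p : ℕ) - 1, by omega⟩, b) else 0) := by
  classical
  rw [Matrix.mulVec, dotProduct, Fintype.sum_prod_type]
  have step : ∀ q : Fin n,
      (∑ c, blockCompanion m n C (p, b) (q, c) * v (q, c))
        = (if (q : ℕ) = n - 1 then ∑ c, C p b c * v (q, c) else 0)
          + (if (q : ℕ) ≠ n - 1 ∧ (p : ℕ) = (q : ℕ) + 1 then v (q, b) else 0) := by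
    intro q
    by_cases hq : (q : ℕ) = n - 1
    · simp [blockCompanion, hq]
    · by_cases hp' : (p : ℕ) = (q : ℕ) + 1
      · simp [blockCompanion, hq, hp', Finset.sum_ite_eq, eq_comm]
      · simp [blockCompanion, hq, hp']
  rw [Finset.sum_congr rfl fun q _ => step q, Finset.sum_add_distrib]
  congr 1
  · rw [Finset.sum_eq_single (⟨n - 1, by omega⟩ : Fin n)]
    · simp
    · intro x _ hx
      rw [if_neg]
      simpa [Fin.ext_iff] using hx
    · simp
  · by_cases hp1 : 1 ≤ (p : ℕ)
    · rw [dif_pos hp1, Finset.sum_eq_single (⟨(p : ℕ) - 1, by omega⟩ : Fin n)]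
      · rw [if_pos]
        refine ⟨by simp; omega, by simp; omega⟩
      · intro x _ hx
        rw [if_neg]
        rintro ⟨-, h2⟩
        refine hx (Fin.ext ?_)
        simp
        omega
      · simp
    · rw [dif_neg hp1, Finset.sum_eq_zero]
      intro x _
      rw [if_neg]
      rintro ⟨-, h2⟩
      omega

variable (C) in
/-- `C` extended to ℕ-indices. -/
def C' (j : ℕ) : Matrix (Fin m) (Fin m) K := if h : j < n then C ⟨j, h⟩ else 0

lemma C'_fin (j : Fin n) : C' C (j : ℕ) = C j := by
  simp [C']

variable (C) in
/-- The state vector of the sequence `s` at time `i`. -/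
def W (s : ℕ → Fin m → K) (i : ℕ) : Fin n × Fin m → K := fun q =>
  if (q.1 : ℕ) = n - 1 then s (i + n) q.2
  else ∑ t ∈ Finset.range ((q.1 : ℕ) + 1),
    (C' C ((q.1 : ℕ) - t)).mulVec (s (i + n - 1 - t)) q.2

lemma hrec_range (hn : 0 < n) (s : ℕ → Fin m → K)
    (hrec : ∀ i, s (i + n) = ∑ j : Fin n, (C j).mulVec (s (i + j))) (i : ℕ) (b : Fin m) :
    s (i + n) b = ∑ j ∈ Finset.range n, (C' C j).mulVec (s (i + j)) b := by
  rw [hrec i]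
  rw [← Fin.sum_univ_eq_sum_range (fun j => (C' C j).mulVec (s (i + j)) b) n]
  simp [C'_fin]

lemma sum_range_pred {M : Type*} [AddCommMonoid M] {n : ℕ} (hn : 0 < n) (g : ℕ → M) :
    ∑ j ∈ Finset.range n, g j = (∑ j ∈ Finset.range (n - 1), g j) + g (n - 1) := by
  obtain ⟨k, rfl⟩ : ∃ k, n = k + 1 := ⟨n - 1, by omega⟩
  simp [Finset.sum_range_succ]

lemma W_mk (s : ℕ → Fin m → K) (i : ℕ) (d : ℕ) (hd : d < n) (hd2 : ¬ (d = n - 1)) (b : Fin m) :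
    W C s i (⟨d, hd⟩, b)
      = ∑ t ∈ Finset.range (d + 1), (C' C (d - t)).mulVec (s (i + n - 1 - t)) b := by
  simp only [W]
  rw [if_neg hd2]

lemma W_succ (hn : 0 < n) (s : ℕ → Fin m → K)
    (hrec : ∀ i, s (i + n) = ∑ j : Fin n, (C j).mulVec (s (i + j))) (i : ℕ) :
    (blockCompanion m n C).mulVec (W C s i) = W C s (i + 1) := by
  funext q
  obtain ⟨p, b⟩ := q
  rw [mulVec_bc hn]
  have hCp : (∑ c, C p b c * W C s i (⟨n - 1, by omega⟩, c))
      = (C' C (p : ℕ)).mulVec (s (i + n)) b := by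
    simp [W, C'_fin, Matrix.mulVec, dotProduct]
  rw [hCp]
  by_cases hp : (p : ℕ) = n - 1
  · -- last block
    have hRHS : W C s (i + 1) (p, b) = s (i + 1 + n) b := by simp [W, hp]
    rw [hRHS, hrec_range hn s hrec (i + 1) b]
    by_cases h2 : 1 ≤ (p : ℕ)
    · rw [dif_pos h2]
      have hW : W C s i (⟨(p : ℕ) - 1, by omega⟩, b)
          = ∑ t ∈ Finset.range (n - 1), (C' C (n - 2 - t)).mulVec (s (i + n - 1 - t)) b := by
        rw [W_mk s i ((p : ℕ) - 1) (by omega) (by omega) b]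
        apply Finset.sum_congr (by congr 1; omega)
        intro t ht
        rw [show (p : ℕ) - 1 - t = n - 2 - t by omega]
      rw [hW]
      have hrefl := Finset.sum_range_reflect
        (fun t => (C' C t).mulVec (s (i + 1 + t)) b) (n - 1)
      have hL : ∑ t ∈ Finset.range (n - 1), (C' C (n - 2 - t)).mulVec (s (i + n - 1 - t)) b
          = ∑ t ∈ Finset.range (n - 1), (C' C t).mulVec (s (i + 1 + t)) b := by
        rw [← hrefl]
        apply Finset.sum_congr rfl
        intro t ht
        simp only [Finset.mem_range] at ht
        have e1 : n - 2 - t = n - 1 - 1 - t := by omega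
        have e2 : i + n - 1 - t = i + 1 + (n - 1 - 1 - t) := by omega
        rw [e1, e2]
      rw [hL]
      rw [sum_range_pred hn (fun j => (C' C j).mulVec (s (i + 1 + j)) b), hp, show i + 1 + (n - 1) = i + n by omega, add_comm]
    · -- p = n-1 and p = 0, so n = 1
      rw [dif_neg h2]
      have hn1 : n = 1 := by omega
      subst hn1
      simp [Fin.val_eq_zero]
  · -- p < n - 1
    have hplt : (p : ℕ) < n - 1 := by omega
    have hRHS : W C s (i + 1) (p, b)
        = ∑ t ∈ Finset.range ((p : ℕ) + 1),
            (C' C ((p : ℕ) - t)).mulVec (s (i + 1 + n - 1 - t)) b := by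
      simp only [W, hp, if_false]
    rw [hRHS, Finset.sum_range_succ']
    have hf0 : (C' C ((p : ℕ) - 0)).mulVec (s (i + 1 + n - 1 - 0)) b
        = (C' C (p : ℕ)).mulVec (s (i + n)) b := by
      rw [Nat.sub_zero, Nat.sub_zero, show i + 1 + n - 1 = i + n by omega]
    rw [hf0]
    have hsum : ∑ t ∈ Finset.range (p : ℕ),
        (C' C ((p : ℕ) - (t + 1))).mulVec (s (i + 1 + n - 1 - (t + 1))) b
        = ∑ t ∈ Finset.range (p : ℕ),
            (C' C ((p : ℕ) - 1 - t)).mulVec (s (i + n - 1 - t)) b := by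
      apply Finset.sum_congr rfl
      intro t ht
      simp only [Finset.mem_range] at ht
      rw [show (p : ℕ) - (t + 1) = (p : ℕ) - 1 - t by omega,
        show i + 1 + n - 1 - (t + 1) = i + n - 1 - t by omega]
    rw [hsum, add_comm]
    congr 1
    by_cases h2 : 1 ≤ (p : ℕ)
    · rw [dif_pos h2]
      rw [W_mk s i ((p : ℕ) - 1) (by omega) (by omega) b]
      apply Finset.sum_congr (by congr 1; omega)
      intro t ht
      rfl
    · rw [dif_neg h2]
      have hp0 : (p : ℕ) = 0 := by omega
      rw [hp0]
      simp

lemma sum_mulVec {ι β : Type*} [Fintype β] (t : Finset ι)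
    (M : ι → Matrix β β K) (v : β → K) :
    (∑ k ∈ t, M k).mulVec v = ∑ k ∈ t, (M k).mulVec v := by
  funext p
  simp only [Matrix.mulVec, dotProduct, Finset.sum_apply, Matrix.sum_apply, Finset.sum_mul]
  exact Finset.sum_comm

lemma W_pow (hn : 0 < n) (s : ℕ → Fin m → K)
    (hrec : ∀ i, s (i + n) = ∑ j : Fin n, (C j).mulVec (s (i + j))) (i k : ℕ) :
    ((blockCompanion m n C) ^ k).mulVec (W C s i) = W C s (i + k) := by
  induction k with
  | zero => simp
  | succ k ih =>
      rw [pow_succ', ← Matrix.mulVec_mulVec, ih, W_succ hn s hrec, ← add_assoc]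

lemma t_eventually_zero (hn : 0 < n) (s : ℕ → Fin m → K)
    (hrec : ∀ i, s (i + n) = ∑ j : Fin n, (C j).mulVec (s (i + j))) (i : ℕ) (b : Fin m) :
    ∑ k ∈ Finset.range ((blockCompanion m n C).charpoly.natDegree + 1),
      (blockCompanion m n C).charpoly.coeff k * s (i + n + k) b = 0 := by
  set T := blockCompanion m n C with hT
  have h0 : (aeval T T.charpoly).mulVec (W C s i) = 0 := by
    rw [Matrix.aeval_self_charpoly]
    simp
  rw [Polynomial.aeval_eq_sum_range] at h0
  have h1 := congrFun h0 ((⟨n - 1, by omega⟩ : Fin n), b)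
  rw [sum_mulVec] at h1
  simp only [Matrix.smul_mulVec, W_pow hn s hrec, Finset.sum_apply,
    Pi.smul_apply, smul_eq_mul, Pi.zero_apply] at h1
  rw [← h1]
  apply Finset.sum_congr rfl
  intro k _
  have : W C s (i + k) ((⟨n - 1, by omega⟩ : Fin n), b) = s (i + k + n) b := by
    simp [W]
  rw [W_pow hn s hrec i k, this, show i + k + n = i + n + k by ring]

lemma backzero (hn : 0 < n) (hC0 : ∀ x : Fin m → K, (C ⟨0, hn⟩).mulVec x = 0 → x = 0)
    (u : ℕ → Fin m → K)
    (hu : ∀ i, u (i + n) = ∑ j : Fin n, (C j).mulVec (u (i + j)))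
    (h0 : ∀ i, n ≤ i → u i = 0) : ∀ i, u i = 0 := by
  haveI : NeZero n := ⟨hn.ne'⟩
  have key : ∀ d i, n ≤ i + d → u i = 0 := by
    intro d
    induction d with
    | zero => intro i hi; exact h0 i (by omega)
    | succ d ih =>
        intro i hi
        by_cases hd : n ≤ i + d
        · exact ih i hd
        · apply hC0
          have hu' := hu i
          have hz : ∀ j : Fin n, j ≠ ⟨0, hn⟩ → (C j).mulVec (u (i + j)) = 0 := by
            intro j hj
            have hj' : (j : ℕ) ≠ 0 := fun h => hj (Fin.ext (by simpa using h))
            have : u (i + j) = 0 := ih (i + j) (by omega)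
            rw [this, Matrix.mulVec_zero]
          have hsum : ∑ j : Fin n, (C j).mulVec (u (i + j))
              = (C ⟨0, hn⟩).mulVec (u (i + ((⟨0, hn⟩ : Fin n) : ℕ))) :=
            Fintype.sum_eq_single (⟨0, hn⟩ : Fin n) hz
          have e : i + ((⟨0, hn⟩ : Fin n) : ℕ) = i := by simp
          rw [hsum, e] at hu'
          rw [← hu']
          exact h0 _ (by omega)
  intro i; exact key n i (by omega)

lemma C0_ker (hn : 0 < n) (hdet : (blockCompanion m n C).det ≠ 0) :
    ∀ x : Fin m → K, (C ⟨0, hn⟩).mulVec x = 0 → x = 0 := by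
  intro x hx
  by_contra hx0
  apply hdet
  rw [← Matrix.exists_mulVec_eq_zero_iff]
  refine ⟨fun q => if (q.1 : ℕ) = n - 1 then x q.2
    else -((C' C ((q.1 : ℕ) + 1)).mulVec x q.2), ?_, ?_⟩
  · intro h
    apply hx0
    funext c
    have h2 := congrFun h ((⟨n - 1, by omega⟩ : Fin n), c)
    simpa using h2
  · funext q
    obtain ⟨p, b⟩ := q
    rw [mulVec_bc hn]
    have hfst : (∑ c, C p b c * (if ((⟨n - 1, by omega⟩ : Fin n) : ℕ) = n - 1 then x c
        else -((C' C (((⟨n - 1, by omega⟩ : Fin n) : ℕ) + 1)).mulVec x c)))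
        = (C p).mulVec x b := by
      simp [Matrix.mulVec, dotProduct]
    by_cases h2 : 1 ≤ (p : ℕ)
    · rw [dif_pos h2]
      rw [hfst]
      have e3 : ∀ h : ((p : ℕ) - 1) < n,
          (if (((⟨(p : ℕ) - 1, h⟩ : Fin n)) : ℕ) = n - 1 then x b
            else -((C' C ((((⟨(p : ℕ) - 1, h⟩ : Fin n)) : ℕ) + 1)).mulVec x b))
          = -((C p).mulVec x b) := by
        intro h
        rw [if_neg (show ¬ (((⟨(p : ℕ) - 1, h⟩ : Fin n) : ℕ) = n - 1) from by simp; omega)]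
        show -((C' C ((p : ℕ) - 1 + 1)).mulVec x b) = _
        rw [show (p : ℕ) - 1 + 1 = (p : ℕ) by omega, C'_fin]
      rw [e3]
      simp
    · rw [dif_neg h2]
      rw [hfst]
      have hp0 : p = ⟨0, hn⟩ := Fin.ext (by simp; omega)
      rw [hp0, hx]
      simp

lemma coeff_zero_ne [Fintype K] {f : K[X]} (hf : IsPrimitivePoly K f) : f.coeff 0 ≠ 0 := by
  intro h
  have hX : (X : K[X]) ∣ f := Polynomial.X_dvd_iff.mpr h
  obtain ⟨g, hg⟩ := hX
  rcases hf.2.1.isUnit_or_isUnit hg with hu | hu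
  · exact Polynomial.not_isUnit_X hu
  · obtain ⟨a, ha, hag⟩ := Polynomial.isUnit_iff.mp hu
    have hfX : f = X := by
      have hlc := hf.1
      rw [hg, ← hag] at hlc ⊢
      have ha1 : a = 1 := by
        simpa [Polynomial.Monic, Polynomial.leadingCoeff_mul, Polynomial.leadingCoeff_X] using hlc
      rw [ha1]
      simp
    have h2 := hf.2.2
    rw [hfX] at h2
    have hmem : (Ideal.Quotient.mk (Ideal.span {(X : K[X])}) X) = 0 :=
      Ideal.Quotient.eq_zero_iff_mem.mpr (Ideal.subset_span (Set.mem_singleton _))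
    haveI : Nontrivial (K[X] ⧸ Ideal.span {(X : K[X])}) :=
      Ideal.Quotient.nontrivial_iff.mpr (fun htop =>
        Polynomial.not_isUnit_X (Ideal.span_singleton_eq_top.mp htop))
    rw [hmem] at h2
    have hzero : orderOf (0 : K[X] ⧸ Ideal.span {(X : K[X])}) = 0 := by
      apply orderOf_eq_zero
      intro hfin
      obtain ⟨k, hk, hk1⟩ := (isOfFinOrder_iff_pow_eq_one).mp hfin
      rw [zero_pow hk.ne'] at hk1
      exact zero_ne_one hk1
    rw [hzero, Polynomial.natDegree_X, pow_one] at h2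
    have hcard : 2 ≤ Fintype.card K := Fintype.one_lt_card
    omega

lemma t_zero (hn : 0 < n) (hC0 : ∀ x : Fin m → K, (C ⟨0, hn⟩).mulVec x = 0 → x = 0)
    (s : ℕ → Fin m → K)
    (hrec : ∀ i, s (i + n) = ∑ j : Fin n, (C j).mulVec (s (i + j))) (i : ℕ) (b : Fin m) :
    ∑ k ∈ Finset.range ((blockCompanion m n C).charpoly.natDegree + 1),
      (blockCompanion m n C).charpoly.coeff k * s (i + k) b = 0 := by
  set f := (blockCompanion m n C).charpoly with hf
  set u : ℕ → Fin m → K :=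
    fun i b => ∑ k ∈ Finset.range (f.natDegree + 1), f.coeff k * s (i + k) b with hu_def
  have hu : ∀ i, u (i + n) = ∑ j : Fin n, (C j).mulVec (u (i + j)) := by
    intro i
    funext b
    show ∑ k ∈ Finset.range (f.natDegree + 1), f.coeff k * s (i + n + k) b = _
    have hs : ∀ k, s (i + n + k) b = ∑ j : Fin n, (C j).mulVec (s (i + k + (j : ℕ))) b := by
      intro k
      rw [show i + n + k = (i + k) + n by ring, hrec (i + k), Finset.sum_apply]
    calc ∑ k ∈ Finset.range (f.natDegree + 1), f.coeff k * s (i + n + k) b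
        = ∑ k ∈ Finset.range (f.natDegree + 1), ∑ j : Fin n,
            f.coeff k * ((C j).mulVec (s (i + k + (j : ℕ))) b) := by
          refine Finset.sum_congr rfl fun k _ => ?_
          rw [hs k, Finset.mul_sum]
      _ = ∑ j : Fin n, ∑ k ∈ Finset.range (f.natDegree + 1),
            f.coeff k * ((C j).mulVec (s (i + k + (j : ℕ))) b) := Finset.sum_comm
      _ = ∑ j : Fin n, (C j).mulVec (u (i + (j : ℕ))) b := by
          refine Finset.sum_congr rfl fun j _ => ?_
          simp only [Matrix.mulVec, dotProduct, hu_def, Finset.mul_sum]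
          rw [Finset.sum_comm]
          refine Finset.sum_congr rfl fun k _ => ?_
          refine Finset.sum_congr rfl fun c _ => ?_
          rw [show i + (j : ℕ) + c = i + c + (j : ℕ) by ring]
          ring
      _ = (∑ j : Fin n, (C j).mulVec (u (i + (j : ℕ)))) b := by rw [Finset.sum_apply]
  have hzero : ∀ i, n ≤ i → u i = 0 := by
    intro i hi
    obtain ⟨i', rfl⟩ : ∃ i', i = i' + n := ⟨i - n, by omega⟩
    funext b
    have h := t_eventually_zero hn s hrec i' b
    show ∑ k ∈ Finset.range (f.natDegree + 1), f.coeff k * s (i' + n + k) b = 0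
    exact h
  have := backzero hn hC0 u hu hzero i
  exact congrFun this b

lemma coord_not_all_zero [Fintype K] (hn : 0 < n) (hm : 0 < m)
    (hprim : IsPrimitivePoly K (blockCompanion m n C).charpoly)
    (s : ℕ → Fin m → K)
    (hrec : ∀ i, s (i + n) = ∑ j : Fin n, (C j).mulVec (s (i + j)))
    (hs0 : ∃ i : Fin n, s (i : ℕ) ≠ 0) (j : Fin m)
    (hz : ∀ i, s i j = 0) : False := by
  classical
  set T := blockCompanion m n C with hT
  have hc0 : T.charpoly.coeff 0 ≠ 0 := coeff_zero_ne hprim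
  have hdet : T.det ≠ 0 := by
    rw [Matrix.det_eq_sign_charpoly_coeff]
    exact mul_ne_zero (pow_ne_zero _ (neg_ne_zero.mpr one_ne_zero)) hc0
  have hC0 := C0_ker hn hdet
  have hW0 : W C s 0 ≠ 0 := by
    intro h0
    have hsn : ∀ i, n ≤ i → s i = 0 := by
      intro i hi
      obtain ⟨i', rfl⟩ : ∃ i', i = i' + n := ⟨i - n, by omega⟩
      have hWi : W C s i' = 0 := by
        have hwp := W_pow hn s hrec 0 i'
        rw [h0, Matrix.mulVec_zero, zero_add] at hwp
        exact hwp.symm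
      funext b
      have hb := congrFun hWi ((⟨n - 1, by omega⟩ : Fin n), b)
      simpa [W] using hb
    have hall := backzero hn hC0 s hrec hsn
    obtain ⟨i0, hi0⟩ := hs0
    exact hi0 (hall _)
  let ψ : (Fin (n * m) → K) →ₗ[K] (Fin n × Fin m → K) :=
    { toFun := fun a => ∑ k : Fin (n * m), a k • (T ^ (k : ℕ)).mulVec (W C s 0)
      map_add' := by
        intro a b
        simp [add_smul, Finset.sum_add_distrib]
      map_smul' := by
        intro r a
        simp [mul_smul, Finset.smul_sum] }
  have hinj : Function.Injective ψ := by
    refine (injective_iff_map_eq_zero ψ).mpr ?_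
    intro a ha
    by_contra hane
    obtain ⟨k0, hk0⟩ := Function.ne_iff.mp hane
    set g : K[X] := ∑ k : Fin (n * m), Polynomial.C (a k) * X ^ (k : ℕ) with hgdef
    have hgcoeff : g.coeff (k0 : ℕ) = a k0 := by
      rw [hgdef, Polynomial.finset_sum_coeff, Finset.sum_eq_single k0]
      · simp [Polynomial.coeff_C_mul, Polynomial.coeff_X_pow]
      · intro k _ hk
        have hkk : ¬ ((k0 : ℕ) = (k : ℕ)) := fun hh => hk (Fin.ext hh.symm)
        simp [Polynomial.coeff_C_mul, Polynomial.coeff_X_pow, hkk]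
      · simp
    have hgne : g ≠ 0 := fun hgg => hk0 (by rw [← hgcoeff, hgg]; simp)
    have hgdeg : g.natDegree < n * m := by
      have hle : g.natDegree ≤ n * m - 1 := by
        apply Polynomial.natDegree_sum_le_of_forall_le
        intro k _
        refine le_trans (Polynomial.natDegree_C_mul_le _ _) ?_
        rw [Polynomial.natDegree_X_pow]
        have := k.isLt
        omega
      have := Nat.mul_pos hn hm
      omega
    have hTg : (aeval T g).mulVec (W C s 0) = 0 := by
      rw [hgdef, map_sum, sum_mulVec]
      have hterm : ∀ k : Fin (n * m),
          (aeval T (Polynomial.C (a k) * X ^ (k : ℕ))).mulVec (W C s 0)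
            = a k • (T ^ (k : ℕ)).mulVec (W C s 0) := by
        intro k
        rw [_root_.map_mul, Polynomial.aeval_C, Polynomial.aeval_X_pow, ← Algebra.smul_def,
          Matrix.smul_mulVec]
      rw [Finset.sum_congr rfl fun k _ => hterm k]
      exact ha
    have hnd : ¬ (T.charpoly ∣ g) := by
      intro hdvd
      have h1 := Polynomial.natDegree_le_of_dvd hdvd hgne
      rw [Matrix.charpoly_natDegree_eq_dim] at h1
      simp only [Fintype.card_prod, Fintype.card_fin] at h1
      omega
    have hcop : IsCoprime T.charpoly g := (hprim.2.1.isCoprime_or_dvd g).resolve_right hnd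
    obtain ⟨u, v, huv⟩ := hcop
    have hW0' : W C s 0 = 0 := by
      have h1 : (aeval T (u * T.charpoly + v * g)).mulVec (W C s 0) = W C s 0 := by
        rw [huv, Polynomial.aeval_one, Matrix.one_mulVec]
      rw [map_add, Matrix.add_mulVec, _root_.map_mul, _root_.map_mul, Matrix.aeval_self_charpoly,
        mul_zero, Matrix.zero_mulVec, ← Matrix.mulVec_mulVec, hTg, Matrix.mulVec_zero] at h1
      simpa using h1.symm
    exact hW0 hW0'
  have hfr : Module.finrank K (Fin (n * m) → K) = Module.finrank K (Fin n × Fin m → K) := by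
    simp [Module.finrank_fintype_fun_eq_card, Fintype.card_prod]
  have hsurj := (LinearMap.injective_iff_surjective_of_finrank_eq_finrank hfr).mp hinj
  obtain ⟨a, ha⟩ := hsurj (Pi.single ((⟨n - 1, by omega⟩ : Fin n), j) 1)
  have hpt := congrFun ha ((⟨n - 1, by omega⟩ : Fin n), j)
  have hL : ψ a ((⟨n - 1, by omega⟩ : Fin n), j) = 0 := by
    show (∑ k : Fin (n * m), a k • (T ^ (k : ℕ)).mulVec (W C s 0))
        ((⟨n - 1, by omega⟩ : Fin n), j) = 0
    rw [Finset.sum_apply]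
    apply Finset.sum_eq_zero
    intro k _
    rw [Pi.smul_apply, W_pow hn s hrec 0 (k : ℕ)]
    have hWk : W C s (0 + (k : ℕ)) ((⟨n - 1, by omega⟩ : Fin n), j)
        = s (0 + (k : ℕ) + n) j := by simp [W]
    rw [hWk, hz]
    simp
  rw [hL] at hpt
  rw [Pi.single_eq_same] at hpt
  exact zero_ne_one hpt

end CLC

theorem coordinate_linear_complexity_of_primitive {K : Type*} [Field K] [Fintype K]
    (m n : ℕ) (hm : 0 < m) (hn : 0 < n)
    (C : Fin n → Matrix (Fin m) (Fin m) K)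
    (hprim : IsPrimitivePoly K (blockCompanion m n C).charpoly)
    (s : ℕ → Fin m → K)
    (hrec : ∀ i, s (i + n) = ∑ j : Fin n, (C j).mulVec (s (i + j)))
    (hs0 : ∃ i : Fin n, s (i : ℕ) ≠ 0) :
    ∀ j : Fin m,
      (∃ c : Fin (m * n) → K,
        ∀ i, s (i + m * n) j = ∑ k : Fin (m * n), c k * s (i + (k : ℕ)) j) ∧
      (∀ L : ℕ, L < m * n →
        ¬ ∃ c : Fin L → K, ∀ i, s (i + L) j = ∑ k : Fin L, c k * s (i + (k : ℕ)) j) := by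
  classical
  intro j
  set T := blockCompanion m n C with hT
  set f := T.charpoly with hf
  have hmonic : f.Monic := hprim.1
  have hNdeg : f.natDegree = m * n := by
    rw [hf, hT, Matrix.charpoly_natDegree_eq_dim]
    simp [Fintype.card_prod, Nat.mul_comm]
  have hc0 : f.coeff 0 ≠ 0 := CLC.coeff_zero_ne hprim
  have hdet : T.det ≠ 0 := by
    rw [Matrix.det_eq_sign_charpoly_coeff]
    exact mul_ne_zero (pow_ne_zero _ (neg_ne_zero.mpr one_ne_zero)) hc0
  have hC0 := CLC.C0_ker hn hdet
  have ht : ∀ i b, ∑ k ∈ Finset.range (f.natDegree + 1), f.coeff k * s (i + k) b = 0 :=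
    fun i b => CLC.t_zero hn hC0 s hrec i b
  constructor
  · refine ⟨fun k => -f.coeff (k : ℕ), fun i => ?_⟩
    have h := ht i j
    rw [hNdeg, Finset.sum_range_succ] at h
    have hml : f.coeff (m * n) = 1 := by rw [← hNdeg]; exact hmonic.coeff_natDegree
    rw [hml, one_mul] at h
    have h2 := eq_neg_of_add_eq_zero_right h
    rw [← Finset.sum_neg_distrib] at h2
    rw [h2, ← Fin.sum_univ_eq_sum_range (fun k => -(f.coeff k * s (i + k) j)) (m * n)]
    exact Finset.sum_congr rfl fun k _ => by ring
  · rintro L hL ⟨c, hc⟩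
    set σ : ℕ → K := fun i => s i j with hσ
    have hfEσ : (aeval CLC.E f : Module.End K (ℕ → K)) σ = 0 := by
      funext i
      rw [CLC.aeval_E_apply]
      exact ht i j
    set h : K[X] := X ^ L - ∑ k : Fin L, Polynomial.C (c k) * X ^ (k : ℕ) with hh
    have hhE : (aeval CLC.E h : Module.End K (ℕ → K)) σ = 0 := by
      funext i
      show (aeval CLC.E h : Module.End K (ℕ → K)) σ i = 0
      rw [hh, map_sub]
      have h1 : (aeval CLC.E (X ^ L : K[X]) : Module.End K (ℕ → K)) σ i = σ (i + L) := by
        rw [Polynomial.aeval_X_pow]; exact CLC.E_pow L σ i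
      have h2 : (aeval CLC.E (∑ k : Fin L, Polynomial.C (c k) * X ^ (k : ℕ)) :
          Module.End K (ℕ → K)) σ i = ∑ k : Fin L, c k * σ (i + (k : ℕ)) := by
        rw [map_sum, LinearMap.sum_apply, Finset.sum_apply]
        refine Finset.sum_congr rfl fun k _ => ?_
        rw [_root_.map_mul, Polynomial.aeval_C, Polynomial.aeval_X_pow, ← Algebra.smul_def,
          LinearMap.smul_apply, Pi.smul_apply, smul_eq_mul, CLC.E_pow]
      rw [LinearMap.sub_apply, Pi.sub_apply, h1, h2, sub_eq_zero]
      exact hc i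
    have hne : h ≠ 0 := by
      have hcoeffL : h.coeff L = 1 := by
        rw [hh, Polynomial.coeff_sub, Polynomial.coeff_X_pow, if_pos rfl,
          Polynomial.finset_sum_coeff]
        have hterm : ∀ k : Fin L, (Polynomial.C (c k) * X ^ (k : ℕ)).coeff L = 0 := by
          intro k
          rw [Polynomial.coeff_C_mul, Polynomial.coeff_X_pow,
            if_neg (by have := k.isLt; omega)]
          ring
        rw [Finset.sum_eq_zero fun k _ => hterm k]
        ring
      intro h0
      rw [h0] at hcoeffL
      simp at hcoeffL
    have hnd : ¬ (f ∣ h) := by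
      intro hdvd
      have h1 := Polynomial.natDegree_le_of_dvd hdvd hne
      have h2 : h.natDegree ≤ L := by
        rw [hh]
        refine le_trans (Polynomial.natDegree_sub_le _ _) ?_
        rw [Polynomial.natDegree_X_pow]
        refine max_le le_rfl ?_
        apply Polynomial.natDegree_sum_le_of_forall_le
        intro k _
        refine le_trans (Polynomial.natDegree_C_mul_le _ _) ?_
        rw [Polynomial.natDegree_X_pow]
        exact le_of_lt k.isLt
      omega
    have hcop : IsCoprime f h := (hprim.2.1.isCoprime_or_dvd h).resolve_right hnd
    have hσ0 : σ = 0 := CLC.seq_zero_of_coprime hcop σ hfEσ hhE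
    exact CLC.coord_not_all_zero hn hm hprim s hrec hs0 j (fun i => congrFun hσ0 i)
end
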